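/- arXiv:2108.12485 — 5 statements merged into one kernel-verified Lean document; each statement's English description precedes it below -/
import Mathlib

section
/- If Σ_{k=0}^{∞} 1/‖D_k‖ = ∞, then any two square-summable solutions of the eigenvalue equation have vanishing Wronskian: for every z ∈ ℂ and every pair of sequences u, v : ℤ_+ → ℂ^l satisfying D_{n−1}u_{n−1} + D_n u_{n+1} + V_n u_n = z u_n and D_{n−1}v_{n−1} + D_n v_{n+1} + V_n v_n = z v_n for all n ≥ 1, with Σ_{n≥0} ‖u_n‖² < ∞ and Σ_{n≥0} ‖v_n‖² < ∞, one has W_{[u,v]}(n) = 0 for every n ≥ 1. -/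
open Matrix Filter

noncomputable section

/-- The complexification of a real matrix. -/
def cmat {l : ℕ} (A : Matrix (Fin l) (Fin l) ℝ) : Matrix (Fin l) (Fin l) ℂ :=
  A.map (Complex.ofReal)

/-- The operator norm of a real `l×l` matrix, i.e. the norm of the induced continuous linear
map on Euclidean space. -/
def opNorm {l : ℕ} (A : Matrix (Fin l) (Fin l) ℝ) : ℝ :=
  ‖Matrix.toEuclideanCLM (𝕜 := ℝ) (n := Fin l) A‖

/-- The Wronskian of two `ℂ^l`-valued sequences (indexed by `ℤ₊ = ℕ`) at `n ≥ 1`: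
`W_{[u,v]}(n) = u_n^t D_{n-1} v_{n-1} − v_n^t D_{n-1} u_{n-1}` (transpose, no conjugation). -/
def wronskianN {l : ℕ} (D : ℕ → Matrix (Fin l) (Fin l) ℝ) (u v : ℕ → Fin l → ℂ) (n : ℕ) : ℂ :=
  u n ⬝ᵥ (cmat (D (n - 1)) *ᵥ v (n - 1)) - v n ⬝ᵥ (cmat (D (n - 1)) *ᵥ u (n - 1))

/-- Each entry of a matrix is bounded by its operator norm. -/
lemma abs_entry_le_opNorm {l : ℕ} (A : Matrix (Fin l) (Fin l) ℝ) (i j : Fin l) :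
    |A i j| ≤ opNorm A := by
  have h := (Matrix.toEuclideanCLM (𝕜 := ℝ) (n := Fin l) A).le_opNorm
      ((WithLp.equiv 2 (Fin l → ℝ)).symm (Pi.single j 1))
  rw [show (Matrix.toEuclideanCLM (𝕜 := ℝ) (n := Fin l) A) ((WithLp.equiv 2 (Fin l → ℝ)).symm (Pi.single j 1))
      = (WithLp.equiv 2 (Fin l → ℝ)).symm (A *ᵥ Pi.single j 1) from rfl] at h
  have h1 : ‖(WithLp.equiv 2 (Fin l → ℝ)).symm (Pi.single j 1)‖ = 1 := by
    rw [show (WithLp.equiv 2 (Fin l → ℝ)).symm (Pi.single j 1)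
        = EuclideanSpace.single j (1:ℝ) from rfl, EuclideanSpace.norm_single]
    norm_num
  rw [h1, mul_one] at h
  refine le_trans ?_ h
  rw [EuclideanSpace.norm_eq]
  have : |A i j| = Real.sqrt (‖((WithLp.equiv 2 (Fin l → ℝ)).symm (A *ᵥ Pi.single j 1)) i‖^2) := by
    rw [Real.sqrt_sq_eq_abs]
    simp [Matrix.mulVec_single]
  rw [this]
  apply Real.sqrt_le_sqrt
  exact Finset.single_le_sum
    (f := fun k => ‖((WithLp.equiv 2 (Fin l → ℝ)).symm (A *ᵥ Pi.single j 1)) k‖^2)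
    (fun k _ => by positivity) (Finset.mem_univ i)

lemma opNorm_nonneg' {l : ℕ} (A : Matrix (Fin l) (Fin l) ℝ) : 0 ≤ opNorm A :=
  norm_nonneg _

lemma opNorm_pos {l : ℕ} (hl : 1 ≤ l) (A : Matrix (Fin l) (Fin l) ℝ)
    (hA : IsUnit A.det) : 0 < opNorm A := by
  rw [opNorm, norm_pos_iff]
  intro h0
  have hA0 : A = 0 :=
    (Matrix.toEuclideanCLM (𝕜 := ℝ) (n := Fin l)).injective
      (h0.trans (map_zero (Matrix.toEuclideanCLM (𝕜 := ℝ) (n := Fin l))).symm)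
  rw [hA0] at hA
  have : Nonempty (Fin l) := ⟨⟨0, hl⟩⟩
  rw [Matrix.det_zero] at hA
  simp at hA

/-- Symmetry of the complexified bilinear form. -/
lemma bilin_symm {l : ℕ} {A : Matrix (Fin l) (Fin l) ℝ} (hA : A.IsSymm)
    (x y : Fin l → ℂ) : x ⬝ᵥ (cmat A *ᵥ y) = y ⬝ᵥ (cmat A *ᵥ x) := by
  simp only [dotProduct, mulVec, dotProduct, cmat, Matrix.map_apply, Finset.mul_sum]
  rw [Finset.sum_comm]
  refine Finset.sum_congr rfl fun j _ => Finset.sum_congr rfl fun i _ => ?_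
  rw [← hA.apply i j]
  ring

/-- Quadratic bound on the complexified bilinear form. -/
lemma bilin_bound {l : ℕ} (A : Matrix (Fin l) (Fin l) ℝ) (x y : Fin l → ℂ) :
    ‖x ⬝ᵥ (cmat A *ᵥ y)‖ ≤ opNorm A * ((l : ℝ) / 2 * (∑ i, ‖x i‖ ^ 2 + ∑ i, ‖y i‖ ^ 2)) := by
  have hA := opNorm_nonneg' A
  calc ‖x ⬝ᵥ (cmat A *ᵥ y)‖ ≤ ∑ i, ∑ j, ‖x i‖ * (|A i j| * ‖y j‖) := by
        rw [dotProduct]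
        refine (norm_sum_le _ _).trans (Finset.sum_le_sum fun i _ => ?_)
        rw [norm_mul, mulVec, dotProduct, ← Finset.mul_sum]
        refine mul_le_mul_of_nonneg_left ?_ (norm_nonneg _)
        refine (norm_sum_le _ _).trans (le_of_eq (Finset.sum_congr rfl fun j _ => ?_))
        rw [norm_mul]
        congr 1
        simp [cmat, Real.norm_eq_abs]
    _ ≤ ∑ i, ∑ j, opNorm A * (‖x i‖ * ‖y j‖) := by
        refine Finset.sum_le_sum fun i _ => Finset.sum_le_sum fun j _ => ?_
        have h' : ‖x i‖ * (|A i j| * ‖y j‖) = |A i j| * (‖x i‖ * ‖y j‖) := by ring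
        rw [h']
        exact mul_le_mul_of_nonneg_right (abs_entry_le_opNorm A i j) (by positivity)
    _ ≤ ∑ i, ∑ j, opNorm A * ((‖x i‖ ^ 2 + ‖y j‖ ^ 2) / 2) := by
        refine Finset.sum_le_sum fun i _ => Finset.sum_le_sum fun j _ =>
          mul_le_mul_of_nonneg_left ?_ hA
        nlinarith [sq_nonneg (‖x i‖ - ‖y j‖)]
    _ = opNorm A * ((l : ℝ) / 2 * (∑ i, ‖x i‖ ^ 2 + ∑ i, ‖y i‖ ^ 2)) := by
        simp only [← Finset.mul_sum]
        congr 1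
        have hx : ∑ i : Fin l, ∑ j : Fin l, (‖x i‖ ^ 2 + ‖y j‖ ^ 2) / 2
            = ∑ i : Fin l, ((l : ℝ) * ‖x i‖ ^ 2 + ∑ j, ‖y j‖ ^ 2) / 2 := by
          refine Finset.sum_congr rfl fun i _ => ?_
          rw [← Finset.sum_div, Finset.sum_add_distrib, Finset.sum_const,
            Finset.card_univ, Fintype.card_fin, nsmul_eq_mul]
        rw [hx, ← Finset.sum_div, Finset.sum_add_distrib, ← Finset.mul_sum,
          Finset.sum_const, Finset.card_univ, Fintype.card_fin, nsmul_eq_mul]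
        ring

/-- If `Σ_{k=0}^∞ 1/‖D_k‖ = ∞`, then any two square-summable solutions of the eigenvalue
equation at the same `z ∈ ℂ` have vanishing Wronskian. -/
theorem wronskian_eq_zero_of_l2_solutions (l : ℕ) (hl : 1 ≤ l)
    (D V : ℕ → Matrix (Fin l) (Fin l) ℝ)
    (hDsymm : ∀ n, (D n).IsSymm) (hVsymm : ∀ n, (V n).IsSymm)
    (hDinv : ∀ n, IsUnit (D n).det)
    (hdiv : Tendsto (fun N : ℕ => ∑ k ∈ Finset.range N, (opNorm (D k))⁻¹) atTop atTop)
    (z : ℂ) (u v : ℕ → Fin l → ℂ)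
    (hu : ∀ n : ℕ, 1 ≤ n → cmat (D (n - 1)) *ᵥ u (n - 1) + cmat (D n) *ᵥ u (n + 1)
        + cmat (V n) *ᵥ u n = z • u n)
    (hv : ∀ n : ℕ, 1 ≤ n → cmat (D (n - 1)) *ᵥ v (n - 1) + cmat (D n) *ᵥ v (n + 1)
        + cmat (V n) *ᵥ v n = z • v n)
    (hul2 : Summable (fun n : ℕ => ∑ i, ‖u n i‖ ^ 2))
    (hvl2 : Summable (fun n : ℕ => ∑ i, ‖v n i‖ ^ 2)) :
    ∀ n : ℕ, 1 ≤ n → wronskianN D u v n = 0 := by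
  -- Step 1: the Wronskian is constant for n ≥ 1
  have hstep : ∀ n : ℕ, 1 ≤ n → wronskianN D u v (n + 1) = wronskianN D u v n := by
    intro n hn
    have hu1 : cmat (D n) *ᵥ u (n + 1)
        = z • u n - cmat (D (n - 1)) *ᵥ u (n - 1) - cmat (V n) *ᵥ u n := by
      rw [← hu n hn]; abel
    have hv1 : cmat (D n) *ᵥ v (n + 1)
        = z • v n - cmat (D (n - 1)) *ᵥ v (n - 1) - cmat (V n) *ᵥ v n := by
      rw [← hv n hn]; abel
    have e1 : u (n + 1) ⬝ᵥ (cmat (D n) *ᵥ v n) = v n ⬝ᵥ (cmat (D n) *ᵥ u (n + 1)) :=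
      bilin_symm (hDsymm n) _ _
    have e2 : v (n + 1) ⬝ᵥ (cmat (D n) *ᵥ u n) = u n ⬝ᵥ (cmat (D n) *ᵥ v (n + 1)) :=
      bilin_symm (hDsymm n) _ _
    have eV : v n ⬝ᵥ (cmat (V n) *ᵥ u n) = u n ⬝ᵥ (cmat (V n) *ᵥ v n) :=
      bilin_symm (hVsymm n) _ _
    have hidx : (n + 1) - 1 = n := rfl
    simp only [wronskianN, hidx]
    rw [e1, e2, hu1, hv1]
    simp only [dotProduct_sub, dotProduct_smul, smul_eq_mul]
    rw [eV, dotProduct_comm (v n) (u n)]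
    ring
  -- Step 2: the Wronskian equals its value at 1
  have hconst : ∀ n : ℕ, 1 ≤ n → wronskianN D u v n = wronskianN D u v 1 := by
    intro n hn
    induction n with
    | zero => omega
    | succ m ih =>
      rcases Nat.eq_or_lt_of_le hn with h1 | h1
      · rw [← h1]
      · have hm : 1 ≤ m := by omega
        rw [hstep m hm, ih hm]
  set W : ℝ := ‖wronskianN D u v 1‖ with hW
  -- Step 3: summable bound
  set c : ℕ → ℝ := fun n => (l : ℝ) / 2 * (∑ i, ‖u (n+1) i‖ ^ 2 + ∑ i, ‖v n i‖ ^ 2)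
      + (l : ℝ) / 2 * (∑ i, ‖v (n+1) i‖ ^ 2 + ∑ i, ‖u n i‖ ^ 2) with hc
  have hcs : Summable c := by
    apply Summable.add
    · exact (((summable_nat_add_iff 1).mpr hul2).add hvl2).mul_left _
    · exact (((summable_nat_add_iff 1).mpr hvl2).add hul2).mul_left _
  have hcnn : ∀ n, 0 ≤ c n := by
    intro n
    have : (0:ℝ) ≤ (l : ℝ) / 2 := by positivity
    refine add_nonneg (mul_nonneg this ?_) (mul_nonneg this ?_) <;>
      exact add_nonneg (Finset.sum_nonneg fun i _ => by positivity)
        (Finset.sum_nonneg fun i _ => by positivity)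
  have hbound : ∀ n : ℕ, W ≤ opNorm (D n) * c n := by
    intro n
    have h1 : wronskianN D u v (n + 1) = wronskianN D u v 1 := hconst (n+1) (by omega)
    have hidx : (n + 1) - 1 = n := rfl
    calc W = ‖wronskianN D u v (n+1)‖ := by rw [h1]
      _ ≤ ‖u (n+1) ⬝ᵥ (cmat (D n) *ᵥ v n)‖ + ‖v (n+1) ⬝ᵥ (cmat (D n) *ᵥ u n)‖ := by
          rw [wronskianN, hidx]; exact norm_sub_le _ _
      _ ≤ opNorm (D n) * ((l : ℝ) / 2 * (∑ i, ‖u (n+1) i‖ ^ 2 + ∑ i, ‖v n i‖ ^ 2))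
          + opNorm (D n) * ((l : ℝ) / 2 * (∑ i, ‖v (n+1) i‖ ^ 2 + ∑ i, ‖u n i‖ ^ 2)) :=
          add_le_add (bilin_bound _ _ _) (bilin_bound _ _ _)
      _ = opNorm (D n) * c n := by rw [hc]; ring
  -- Step 4: conclude W = 0
  have hW0 : W = 0 := by
    by_contra h0
    have hWpos : 0 < W := lt_of_le_of_ne (norm_nonneg _) (Ne.symm h0)
    have hkey : ∀ N : ℕ, W * ∑ k ∈ Finset.range N, (opNorm (D k))⁻¹ ≤ ∑' n, c n := by
      intro N
      rw [Finset.mul_sum]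
      calc ∑ k ∈ Finset.range N, W * (opNorm (D k))⁻¹
          ≤ ∑ k ∈ Finset.range N, c k := by
            refine Finset.sum_le_sum fun k _ => ?_
            have hpos := opNorm_pos hl (D k) (hDinv k)
            rw [← div_eq_mul_inv, div_le_iff₀ hpos, mul_comm]
            exact hbound k
        _ ≤ ∑' n, c n := Summable.sum_le_tsum _ (fun k _ => hcnn k) hcs
    have htend : Tendsto (fun N : ℕ => W * ∑ k ∈ Finset.range N, (opNorm (D k))⁻¹)
        atTop atTop := hdiv.const_mul_atTop hWpos
    obtain ⟨N, hN⟩ := (htend.eventually_gt_atTop (∑' n, c n)).exists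
    exact absurd (hkey N) (not_le.mpr hN)
  intro n hn
  rw [hconst n hn, ← norm_eq_zero]
  exact hW0
end
end

section
/- Let x ∈ ℝ, y > 0 and z = x + iy. Let φ and ψ be the Dirichlet and Neumann matrix solutions of the eigenvalue equation at x, and let F = (F_n)_{n≥0} be a matrix solution of the eigenvalue equation at z with F_0 = I and F_1 = −M D_0 for some l×l complex matrix M. Then for every n ≥ 1, F_n = ψ_n − φ_n M D_0 − iy ψ_n Σ_{k=1}^{n} D_0^{-1} φ_k^t F_k + iy φ_n Σ_{k=1}^{n} D_0^{-1} ψ_k^t F_k. -/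
open Matrix

noncomputable section

/-- `U` is a matrix solution of the eigenvalue equation at `w`:
`D_n U_{n+1} + D_{n-1} U_{n-1} + V_n U_n = w U_n` for all `n ≥ 1`. -/
def IsMatSol {l : ℕ} (D V : ℕ → Matrix (Fin l) (Fin l) ℝ) (w : ℂ)
    (U : ℕ → Matrix (Fin l) (Fin l) ℂ) : Prop :=
  ∀ n : ℕ, 1 ≤ n →
    cmat (D n) * U (n + 1) + cmat (D (n - 1)) * U (n - 1) + cmat (V n) * U n = w • U n

def wSum {l : ℕ} (e0 : Matrix (Fin l) (Fin l) ℂ) (u F : ℕ → Matrix (Fin l) (Fin l) ℂ)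
    (n : ℕ) : Matrix (Fin l) (Fin l) ℂ :=
  ∑ k ∈ Finset.Icc 1 n, e0 * (u k)ᵀ * F k

lemma wSum_zero {l : ℕ} (e0 : Matrix (Fin l) (Fin l) ℂ) (u F : ℕ → Matrix (Fin l) (Fin l) ℂ) :
    wSum e0 u F 0 = 0 := by simp [wSum]

lemma wSum_succ {l : ℕ} (e0 : Matrix (Fin l) (Fin l) ℂ) (u F : ℕ → Matrix (Fin l) (Fin l) ℂ)
    (n : ℕ) : wSum e0 u F (n+1) = wSum e0 u F n + e0 * (u (n+1))ᵀ * F (n+1) :=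
  Finset.sum_Icc_succ_top (by omega) _

lemma rep_main {l : ℕ} (d v : ℕ → Matrix (Fin l) (Fin l) ℂ)
    (hdsym : ∀ n, (d n)ᵀ = d n) (hvsym : ∀ n, (v n)ᵀ = v n)
    (hdu : ∀ n, IsUnit (d n).det)
    (z w : ℂ) (φ ψ F : ℕ → Matrix (Fin l) (Fin l) ℂ)
    (hφ : ∀ n, d (n+1) * φ (n+2) + d n * φ n + v (n+1) * φ (n+1) = z • φ (n+1))
    (hφ0 : φ 0 = 0) (hφ1 : φ 1 = 1)
    (hψ : ∀ n, d (n+1) * ψ (n+2) + d n * ψ n + v (n+1) * ψ (n+1) = z • ψ (n+1))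
    (hψ0 : ψ 0 = 1) (hψ1 : ψ 1 = 0)
    (M : Matrix (Fin l) (Fin l) ℂ)
    (hF : ∀ n, d (n+1) * F (n+2) + d n * F n + v (n+1) * F (n+1) = (z + w) • F (n+1))
    (hF0 : F 0 = 1) (hF1 : F 1 = -(M * d 0)) :
    ∀ n, F n = ψ n * (1 - w • wSum (d 0)⁻¹ φ F n)
      + φ n * (-(M * d 0) + w • wSum (d 0)⁻¹ ψ F n) := by
  set e : ℕ → Matrix (Fin l) (Fin l) ℂ := fun n => (d n)⁻¹ with he
  have hde : ∀ n, d n * e n = 1 := fun n => Matrix.mul_nonsing_inv _ (hdu n)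
  have hed : ∀ n, e n * d n = 1 := fun n => Matrix.nonsing_inv_mul _ (hdu n)
  have hesym : ∀ n, (e n)ᵀ = e n := fun n => by
    show ((d n)⁻¹)ᵀ = (d n)⁻¹
    rw [Matrix.transpose_nonsing_inv, hdsym]
  have cancel : ∀ (m : ℕ) (A B : Matrix (Fin l) (Fin l) ℂ), d m * A = d m * B → A = B := by
    intro m A B h
    calc A = (e m * d m) * A := by rw [hed, one_mul]
    _ = e m * (d m * B) := by rw [mul_assoc, h]
    _ = (e m * d m) * B := by rw [mul_assoc]
    _ = B := by rw [hed, one_mul]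
  set c : ℕ → Matrix (Fin l) (Fin l) ℂ := fun n => z • (1 : Matrix (Fin l) (Fin l) ℂ) - v (n+1)
    with hc
  have hcsym : ∀ n, (c n)ᵀ = c n := fun n => by
    rw [hc]; simp only [transpose_sub, transpose_smul, transpose_one, hvsym]
  have hcmul : ∀ n A, c n * A = z • A - v (n+1) * A := fun n A => by
    rw [hc]; simp only [sub_mul, smul_mul_assoc, one_mul]
  -- rearranged recurrences
  have hψX : ∀ n, d (n+1) * ψ (n+2) = c n * ψ (n+1) - d n * ψ n := by
    intro n; rw [hcmul, ← hψ n]; abel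
  have hφX : ∀ n, d (n+1) * φ (n+2) = c n * φ (n+1) - d n * φ n := by
    intro n; rw [hcmul, ← hφ n]; abel
  have hψ2 : ∀ n, ψ (n+2) = e (n+1) * (c n * ψ (n+1) - d n * ψ n) := by
    intro n; rw [← hψX n, ← mul_assoc, hed, one_mul]
  have hφ2 : ∀ n, φ (n+2) = e (n+1) * (c n * φ (n+1) - d n * φ n) := by
    intro n; rw [← hφX n, ← mul_assoc, hed, one_mul]
  -- Wronskian-type identities
  have wron : ∀ n, (ψ n * e 0 * (φ n)ᵀ - φ n * e 0 * (ψ n)ᵀ = 0)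
      ∧ (ψ (n+1) * e 0 * (φ (n+1))ᵀ - φ (n+1) * e 0 * (ψ (n+1))ᵀ = 0)
      ∧ (ψ (n+1) * e 0 * (φ n)ᵀ - φ (n+1) * e 0 * (ψ n)ᵀ = -(e n)) := by
    intro n
    induction n with
    | zero =>
      refine ⟨?_, ?_, ?_⟩ <;>
        simp [hφ0, hφ1, hψ0, hψ1]
    | succ n ih =>
      obtain ⟨h1, h2, h3⟩ := ih
      -- transposed version of h3
      have h3t : φ n * e 0 * (ψ (n+1))ᵀ - ψ n * e 0 * (φ (n+1))ᵀ = -(e n) := by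
        have := congrArg Matrix.transpose h3
        simpa [transpose_sub, transpose_mul, hesym, mul_assoc] using this
      have h3' : ψ n * e 0 * (φ (n+1))ᵀ - φ n * e 0 * (ψ (n+1))ᵀ = e n := by
        rw [← neg_sub (φ n * e 0 * (ψ (n+1))ᵀ), h3t, neg_neg]
      have e1 : c n * -e n * d n = -(c n) := by
        rw [mul_neg, neg_mul, mul_assoc, hed, mul_one]
      have e2 : d n * -e n * c n = -(c n) := by
        rw [mul_neg, neg_mul, hde, one_mul]
      refine ⟨h2, ?_, ?_⟩
      · calc ψ (n+2) * e 0 * (φ (n+2))ᵀ - φ (n+2) * e 0 * (ψ (n+2))ᵀ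
            = e (n+1) * (c n * (ψ (n+1) * e 0 * (φ (n+1))ᵀ - φ (n+1) * e 0 * (ψ (n+1))ᵀ) * c n
                - c n * (ψ (n+1) * e 0 * (φ n)ᵀ - φ (n+1) * e 0 * (ψ n)ᵀ) * d n
                + d n * (φ n * e 0 * (ψ (n+1))ᵀ - ψ n * e 0 * (φ (n+1))ᵀ) * c n
                + d n * (ψ n * e 0 * (φ n)ᵀ - φ n * e 0 * (ψ n)ᵀ) * d n) * e (n+1) := by
              rw [hψ2 n, hφ2 n]
              simp only [transpose_mul, transpose_sub, hcsym, hdsym, hesym]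
              noncomm_ring
          _ = 0 := by
              rw [h2, h3, h3t, h1, e1, e2]
              simp
      · calc ψ (n+2) * e 0 * (φ (n+1))ᵀ - φ (n+2) * e 0 * (ψ (n+1))ᵀ
            = e (n+1) * (c n * (ψ (n+1) * e 0 * (φ (n+1))ᵀ - φ (n+1) * e 0 * (ψ (n+1))ᵀ)
                - d n * (ψ n * e 0 * (φ (n+1))ᵀ - φ n * e 0 * (ψ (n+1))ᵀ)) := by
              rw [hψ2 n, hφ2 n]
              noncomm_ring
          _ = -(e (n+1)) := by
              rw [h2, h3', mul_zero, zero_sub, hde]; simp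
  -- main induction
  have main : ∀ n, (F n = ψ n * (1 - w • wSum (e 0) φ F n)
        + φ n * (-(M * d 0) + w • wSum (e 0) ψ F n))
      ∧ (F (n+1) = ψ (n+1) * (1 - w • wSum (e 0) φ F (n+1))
        + φ (n+1) * (-(M * d 0) + w • wSum (e 0) ψ F (n+1))) := by
    intro n
    induction n with
    | zero =>
      constructor
      · simp [hF0, hφ0, hψ0, wSum_zero]
      · rw [show (1:ℕ) = 0 + 1 from rfl, wSum_succ, wSum_succ, wSum_zero, wSum_zero]
        simp [hψ1, hφ1, hF1]
    | succ n ih =>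
      obtain ⟨ih1, ih2⟩ := ih
      refine ⟨ih2, ?_⟩
      apply cancel (n+1)
      have hFX : d (n+1) * F (n+2) = c n * F (n+1) - d n * F n + w • F (n+1) := by
        have h : d (n+1) * F (n+2) = (z + w) • F (n+1) - d n * F n - v (n+1) * F (n+1) := by
          rw [← hF n]; abel
        rw [hcmul, h, add_smul]; abel
      rw [hFX]; symm
      -- P (n+2) = 0, multiplied
      have hP2 : ψ (n+2) * (e 0 * ((φ (n+2))ᵀ * F (n+2)))
          = φ (n+2) * (e 0 * ((ψ (n+2))ᵀ * F (n+2))) := by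
        have h := sub_eq_zero.mp (wron (n+1)).2.1
        have h' := congrArg (· * F (n+2)) h
        simpa [mul_assoc] using h'
      -- Q-transpose identity multiplied
      have hQ : ψ n * (e 0 * ((φ (n+1))ᵀ * F (n+1)))
          - φ n * (e 0 * ((ψ (n+1))ᵀ * F (n+1))) = e n * F (n+1) := by
        have h3t : φ n * e 0 * (ψ (n+1))ᵀ - ψ n * e 0 * (φ (n+1))ᵀ = -(e n) := by
          have := congrArg Matrix.transpose (wron n).2.2
          simpa [transpose_sub, transpose_mul, hesym, mul_assoc] using this
        have h3' : ψ n * e 0 * (φ (n+1))ᵀ - φ n * e 0 * (ψ (n+1))ᵀ = e n := by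
          rw [← neg_sub (φ n * e 0 * (ψ (n+1))ᵀ), h3t, neg_neg]
        have h' := congrArg (· * F (n+1)) h3'
        simpa [mul_assoc, sub_mul] using h'
      calc d (n+1) * (ψ (n+2) * (1 - w • wSum (e 0) φ F (n+2))
              + φ (n+2) * (-(M * d 0) + w • wSum (e 0) ψ F (n+2)))
          = d (n+1) * ψ (n+2) * (1 - w • wSum (e 0) φ F (n+1))
            + d (n+1) * φ (n+2) * (-(M * d 0) + w • wSum (e 0) ψ F (n+1))
            + w • (d (n+1) * (φ (n+2) * (e 0 * ((ψ (n+2))ᵀ * F (n+2)))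
                - ψ (n+2) * (e 0 * ((φ (n+2))ᵀ * F (n+2))))) := by
            rw [wSum_succ (e 0) φ F (n+1), wSum_succ (e 0) ψ F (n+1)]
            simp only [mul_add, mul_sub, sub_mul, add_mul, smul_add, smul_sub, mul_smul_comm,
              smul_mul_assoc, mul_one, mul_neg, neg_mul, mul_assoc]
            abel
        _ = d (n+1) * ψ (n+2) * (1 - w • wSum (e 0) φ F (n+1))
            + d (n+1) * φ (n+2) * (-(M * d 0) + w • wSum (e 0) ψ F (n+1)) := by
            rw [hP2, sub_self, mul_zero, smul_zero, add_zero]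
        _ = (c n * ψ (n+1) - d n * ψ n) * (1 - w • wSum (e 0) φ F (n+1))
            + (c n * φ (n+1) - d n * φ n) * (-(M * d 0) + w • wSum (e 0) ψ F (n+1)) := by
            rw [hψX n, hφX n]
        _ = c n * (ψ (n+1) * (1 - w • wSum (e 0) φ F (n+1))
              + φ (n+1) * (-(M * d 0) + w • wSum (e 0) ψ F (n+1)))
            - d n * (ψ n * (1 - w • wSum (e 0) φ F n)
              + φ n * (-(M * d 0) + w • wSum (e 0) ψ F n))
            + w • (d n * (ψ n * (e 0 * ((φ (n+1))ᵀ * F (n+1)))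
                - φ n * (e 0 * ((ψ (n+1))ᵀ * F (n+1))))) := by
            rw [wSum_succ (e 0) φ F n, wSum_succ (e 0) ψ F n]
            simp only [mul_add, mul_sub, sub_mul, add_mul, smul_add, smul_sub, mul_smul_comm,
              smul_mul_assoc, mul_one, mul_neg, neg_mul, mul_assoc]
            abel
        _ = c n * F (n+1) - d n * F n + w • F (n+1) := by
            rw [← ih2, ← ih1, hQ, ← mul_assoc, hde, one_mul]
  exact fun n => (main n).1

/-- **Lemma 3.1 of the paper**: representation of a square matrix solution `F` at `z = x + iy`
with `F_0 = I`, `F_1 = −M D_0` in terms of the Dirichlet and Neumann solutions `φ, ψ` at `x`. -/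
theorem matSol_representation (l : ℕ) (hl : 1 ≤ l)
    (D V : ℕ → Matrix (Fin l) (Fin l) ℝ)
    (hDsymm : ∀ n, (D n).IsSymm) (hVsymm : ∀ n, (V n).IsSymm)
    (hDinv : ∀ n, IsUnit (D n).det)
    (x y : ℝ) (hy : 0 < y)
    (φ ψ F : ℕ → Matrix (Fin l) (Fin l) ℂ)
    (hφ : IsMatSol D V (x : ℂ) φ) (hφ0 : φ 0 = 0) (hφ1 : φ 1 = 1)
    (hψ : IsMatSol D V (x : ℂ) ψ) (hψ0 : ψ 0 = 1) (hψ1 : ψ 1 = 0)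
    (M : Matrix (Fin l) (Fin l) ℂ)
    (hF : IsMatSol D V ((x : ℂ) + (y : ℂ) * Complex.I) F)
    (hF0 : F 0 = 1) (hF1 : F 1 = -(M * cmat (D 0))) :
    ∀ n : ℕ, 1 ≤ n →
      F n = ψ n - φ n * M * cmat (D 0)
        - (Complex.I * (y : ℂ)) •
            (ψ n * ∑ k ∈ Finset.Icc 1 n, (cmat (D 0))⁻¹ * (φ k)ᵀ * F k)
        + (Complex.I * (y : ℂ)) •
            (φ n * ∑ k ∈ Finset.Icc 1 n, (cmat (D 0))⁻¹ * (ψ k)ᵀ * F k) := by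
  have hdsym : ∀ n, (cmat (D n))ᵀ = cmat (D n) := fun n => by
    unfold cmat; rw [← Matrix.transpose_map, (hDsymm n)]
  have hvsym : ∀ n, (cmat (V n))ᵀ = cmat (V n) := fun n => by
    unfold cmat; rw [← Matrix.transpose_map, (hVsymm n)]
  have hdu : ∀ n, IsUnit (cmat (D n)).det := fun n => by
    have : (cmat (D n)).det = ((D n).det : ℂ) := by
      rw [show cmat (D n) = (D n).map Complex.ofRealHom from rfl, ← RingHom.mapMatrix_apply,
        ← RingHom.map_det]
      rfl
    rw [this]
    simpa [isUnit_iff_ne_zero] using (hDinv n).ne_zero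
  have key := rep_main (fun n => cmat (D n)) (fun n => cmat (V n)) hdsym hvsym hdu
    (x : ℂ) (Complex.I * (y : ℂ)) φ ψ F
    (fun n => by simpa using hφ (n+1) (by omega)) hφ0 hφ1
    (fun n => by simpa using hψ (n+1) (by omega)) hψ0 hψ1 M
    (fun n => by
      have h := hF (n+1) (by omega)
      simp only [Nat.add_sub_cancel] at h
      rw [show (x : ℂ) + Complex.I * (y : ℂ) = (x : ℂ) + (y : ℂ) * Complex.I from by ring]
      exact h) hF0 hF1
  intro n _
  rw [key n]
  show _ = _ - _ - _ • (ψ n * wSum (cmat (D 0))⁻¹ φ F n) + _ • (φ n * wSum (cmat (D 0))⁻¹ ψ F n)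
  simp only [mul_add, mul_sub, mul_one, mul_neg, mul_smul_comm, ← mul_assoc]
  abel
end
end

section
/- Let z ∈ ℂ and suppose sup_{n≥0} ‖D_n‖ < ∞. Let F = (F_n)_{n≥0} be a matrix solution of the eigenvalue equation at z with F_0 = I and Σ_{n≥0} ‖F_n‖_F² < ∞, and set M := −F_1 D_0^{-1}. Then D_0 · Im[M] · D_0 = Im(z) · Σ_{k=1}^{∞} F_k* F_k, where Im[M] := (M − M*)/(2i) and the series on the right converges. -/
open Matrix

set_option maxHeartbeats 1000000

noncomputable section

/-- The Frobenius norm of a complex `l×l` matrix: `‖A‖_F = sqrt(tr(A*A))`. -/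
def frob {l : ℕ} (A : Matrix (Fin l) (Fin l) ℂ) : ℝ :=
  Real.sqrt ((Aᴴ * A).trace.re)

/-! ### Auxiliary lemmas -/

lemma cmat_herm {l : ℕ} {A : Matrix (Fin l) (Fin l) ℝ} (h : A.IsSymm) : (cmat A)ᴴ = cmat A := by
  ext i j
  simp [cmat, Matrix.conjTranspose_apply, Matrix.map_apply]
  exact_mod_cast congrFun (congrFun h i) j

lemma frob_sq {l : ℕ} (A : Matrix (Fin l) (Fin l) ℂ) :
    frob A ^ 2 = ∑ i, ∑ j, ‖A i j‖ ^ 2 := by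
  have htr : (Aᴴ * A).trace.re = ∑ i, ∑ j, ‖A i j‖ ^ 2 := by
    rw [Matrix.trace]
    simp only [Matrix.diag, Matrix.mul_apply, Matrix.conjTranspose_apply]
    rw [Complex.re_sum, Finset.sum_comm]
    congr 1; ext i
    rw [Complex.re_sum]
    congr 1; ext j
    have h1 : (star (A j i) * A j i).re = ‖A j i‖ ^ 2 := by
      simp [Complex.star_def, Complex.normSq_apply, Complex.sq_norm,
        ← Complex.normSq_eq_norm_sq, Complex.normSq_apply]
    exact h1
  rw [frob, Real.sq_sqrt]
  · exact htr
  · rw [htr]; positivity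

lemma frob_nonneg {l : ℕ} (A : Matrix (Fin l) (Fin l) ℂ) : 0 ≤ frob A :=
  Real.sqrt_nonneg _

lemma col_sq_le_frob_sq {l : ℕ} (A : Matrix (Fin l) (Fin l) ℂ) (i : Fin l) :
    ∑ a, ‖A a i‖ ^ 2 ≤ frob A ^ 2 := by
  rw [frob_sq]
  refine Finset.sum_le_sum fun a _ => ?_
  exact Finset.single_le_sum (f := fun j => ‖A a j‖ ^ 2) (fun _ _ => sq_nonneg _)
    (Finset.mem_univ i)

lemma entry_le_frob {l : ℕ} (A : Matrix (Fin l) (Fin l) ℂ) (i j : Fin l) :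
    ‖A i j‖ ≤ frob A := by
  have h0 : 0 ≤ frob A := frob_nonneg A
  have h : ‖A i j‖ ^ 2 ≤ frob A ^ 2 := by
    calc ‖A i j‖ ^ 2 ≤ ∑ a, ‖A a j‖ ^ 2 :=
          Finset.single_le_sum (f := fun a => ‖A a j‖ ^ 2) (fun _ _ => sq_nonneg _)
            (Finset.mem_univ i)
    _ ≤ frob A ^ 2 := col_sq_le_frob_sq A j
  nlinarith [norm_nonneg (A i j)]

lemma entry_le_opNorm {l : ℕ} (A : Matrix (Fin l) (Fin l) ℝ) (a b : Fin l) :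
    |A a b| ≤ opNorm A := by
  set T := Matrix.toEuclideanCLM (𝕜 := ℝ) (n := Fin l) A with hT
  set x : EuclideanSpace ℝ (Fin l) := EuclideanSpace.single b 1 with hx
  have hxnorm : ‖x‖ = 1 := by rw [hx, EuclideanSpace.norm_single]; norm_num
  have h1 : ‖T x‖ ≤ ‖T‖ := by
    have := T.le_opNorm x
    rwa [hxnorm, mul_one] at this
  have h2 : T x a = A a b := by
    rw [hx, show (EuclideanSpace.single b (1:ℝ)) = WithLp.toLp 2 (Pi.single b 1) from rfl,
      hT, Matrix.toEuclideanCLM_toLp]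
    simp [Matrix.mulVec_single]
  have h3 : |T x a| ≤ ‖T x‖ := by
    rw [EuclideanSpace.norm_eq]
    have h4 : |T x a| = Real.sqrt (‖T x a‖ ^ 2) := by rw [Real.sqrt_sq_eq_abs]; simp
    rw [h4]
    apply Real.sqrt_le_sqrt
    exact Finset.single_le_sum (f := fun i => ‖T x i‖ ^ 2) (fun i _ => sq_nonneg _)
      (Finset.mem_univ a)
  rw [← h2]
  exact h3.trans h1

lemma step_alg {l : ℕ} (Dm Dm1 Vc G Fm Fm2 : Matrix (Fin l) (Fin l) ℂ)
    (hDm : Dmᴴ = Dm) (hDm1 : Dm1ᴴ = Dm1) (hVc : Vcᴴ = Vc) (z : ℂ)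
    (hA : Dm1 * Fm2 + Dm * Fm = z • G - Vc * G) :
    Gᴴ * Dm1 * Fm2 - Fm2ᴴ * Dm1 * G
      = (Fmᴴ * Dm * G - Gᴴ * Dm * Fm) + (z - starRingEnd ℂ z) • (Gᴴ * G) := by
  have h1 : Gᴴ * Dm1 * Fm2 - Fm2ᴴ * Dm1 * G
      = (Fmᴴ * Dm * G - Gᴴ * Dm * Fm)
        + (Gᴴ * (Dm1 * Fm2 + Dm * Fm) - (Dm1 * Fm2 + Dm * Fm)ᴴ * G) := by
    simp only [Matrix.conjTranspose_add, Matrix.conjTranspose_mul, hDm, hDm1,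
      Matrix.mul_add, Matrix.add_mul, mul_assoc]
    abel
  rw [h1, hA]
  simp only [Matrix.conjTranspose_sub, Matrix.conjTranspose_smul, Matrix.conjTranspose_mul, hVc,
    Matrix.mul_sub, Matrix.sub_mul, Matrix.mul_smul, Matrix.smul_mul, mul_assoc, sub_smul,
    mul_smul_comm, smul_mul_assoc]
  simp only [starRingEnd_apply]
  module

lemma entry_triple_le {l : ℕ} (A B : Matrix (Fin l) (Fin l) ℂ) (Dr : Matrix (Fin l) (Fin l) ℝ)
    (C : ℝ) (hC : ∀ a b, |Dr a b| ≤ C) (i j : Fin l) :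
    ‖(Aᴴ * cmat Dr * B) i j‖ ≤ (l : ℝ) ^ 2 * C * frob A * frob B := by
  have hCnn : 0 ≤ C := le_trans (abs_nonneg _) (hC i j)
  have heq : (Aᴴ * cmat Dr * B) i j = ∑ b, ∑ a, star (A a i) * ((Dr a b : ℂ)) * B b j := by
    simp only [Matrix.mul_apply, Matrix.conjTranspose_apply, cmat, Matrix.map_apply,
      Finset.sum_mul]
  rw [heq]
  calc ‖∑ b, ∑ a, star (A a i) * ((Dr a b : ℂ)) * B b j‖
      ≤ ∑ b, ∑ a, ‖star (A a i) * ((Dr a b : ℂ)) * B b j‖ :=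
        (norm_sum_le _ _).trans (Finset.sum_le_sum fun b _ => norm_sum_le _ _)
    _ ≤ ∑ _b : Fin l, ∑ _a : Fin l, frob A * C * frob B := by
        refine Finset.sum_le_sum fun b _ => Finset.sum_le_sum fun a _ => ?_
        rw [norm_mul, norm_mul, norm_star]
        have h1 : ‖A a i‖ ≤ frob A := entry_le_frob A a i
        have h2 : ‖((Dr a b : ℝ) : ℂ)‖ ≤ C := by
          rw [Complex.norm_real, Real.norm_eq_abs]; exact hC a b
        have h3 : ‖B b j‖ ≤ frob B := entry_le_frob B b j
        have := frob_nonneg A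
        have := frob_nonneg B
        gcongr <;> positivity
    _ = (l : ℝ) ^ 2 * C * frob A * frob B := by
        simp only [Finset.sum_const, Finset.card_univ, Fintype.card_fin, nsmul_eq_mul]
        push_cast
        ring

/-- `D_0 Im[M] D_0 = Im(z) Σ_{k≥1} F_k* F_k` for a square-summable matrix solution `F` at `z`
with `F_0 = I` and `M := −F_1 D_0^{-1}`; the series converges. -/
theorem D0_imM_D0_eq (l : ℕ) (hl : 1 ≤ l)
    (D V : ℕ → Matrix (Fin l) (Fin l) ℝ)
    (hDsymm : ∀ n, (D n).IsSymm) (hVsymm : ∀ n, (V n).IsSymm)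
    (hDinv : ∀ n, IsUnit (D n).det)
    (hDbdd : ∃ C : ℝ, ∀ n, opNorm (D n) ≤ C)
    (z : ℂ) (F : ℕ → Matrix (Fin l) (Fin l) ℂ)
    (hF : IsMatSol D V z F) (hF0 : F 0 = 1)
    (hFl2 : Summable (fun n : ℕ => frob (F n) ^ 2)) :
    Summable (fun k : ℕ => (F (k + 1))ᴴ * F (k + 1)) ∧
      cmat (D 0) * ((2 * Complex.I)⁻¹ • (-(F 1) * (cmat (D 0))⁻¹
            - (-(F 1) * (cmat (D 0))⁻¹)ᴴ)) * cmat (D 0)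
        = (z.im : ℂ) • ∑' k : ℕ, (F (k + 1))ᴴ * F (k + 1) := by
  obtain ⟨C, hC⟩ := hDbdd
  have hCentry : ∀ n a b, |D n a b| ≤ C := fun n a b => (entry_le_opNorm (D n) a b).trans (hC n)
  -- the Wronskian-type sequence
  set G : ℕ → Matrix (Fin l) (Fin l) ℂ := fun k => (F (k + 1))ᴴ * F (k + 1) with hG
  set W : ℕ → Matrix (Fin l) (Fin l) ℂ :=
    fun n => (F n)ᴴ * cmat (D n) * F (n + 1) - (F (n + 1))ᴴ * cmat (D n) * F n with hWdef
  -- step identity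
  have hstep : ∀ m : ℕ, W (m + 1) = W m + (z - starRingEnd ℂ z) • G m := by
    intro m
    have heq := hF (m + 1) (by omega)
    simp only [Nat.add_sub_cancel] at heq
    have hA : cmat (D (m + 1)) * F (m + 1 + 1) + cmat (D m) * F m
        = z • F (m + 1) - cmat (V (m + 1)) * F (m + 1) := by
      rw [eq_sub_iff_add_eq]; exact heq
    simp only [hWdef, hG]
    exact step_alg (cmat (D m)) (cmat (D (m + 1))) (cmat (V (m + 1))) (F (m + 1)) (F m)
      (F (m + 1 + 1)) (cmat_herm (hDsymm m)) (cmat_herm (hDsymm (m + 1)))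
      (cmat_herm (hVsymm (m + 1))) z hA
  -- partial sums
  have hpartial : ∀ N : ℕ,
      W N = W 0 + (z - starRingEnd ℂ z) • ∑ m ∈ Finset.range N, G m := by
    intro N
    induction N with
    | zero => simp
    | succ N ih => rw [hstep N, ih, Finset.sum_range_succ, smul_add]; abel
  -- summability
  have hbfun : Summable (fun k : ℕ => frob (F (k + 1)) ^ 2) :=
    (summable_nat_add_iff 1).mpr hFl2
  have hentry : ∀ (i j : Fin l) (k : ℕ), ‖G k i j‖ ≤ frob (F (k + 1)) ^ 2 := by
    intro i j k
    have heq : G k i j = ∑ a, star (F (k + 1) a i) * F (k + 1) a j := by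
      simp [hG, Matrix.mul_apply, Matrix.conjTranspose_apply]
    rw [heq]
    calc ‖∑ a, star (F (k + 1) a i) * F (k + 1) a j‖
        ≤ ∑ a, ‖star (F (k + 1) a i) * F (k + 1) a j‖ := norm_sum_le _ _
      _ ≤ ∑ a, (‖F (k + 1) a i‖ ^ 2 + ‖F (k + 1) a j‖ ^ 2) / 2 := by
          refine Finset.sum_le_sum fun a _ => ?_
          rw [norm_mul, norm_star]
          nlinarith [norm_nonneg (F (k + 1) a i), norm_nonneg (F (k + 1) a j),
            sq_nonneg (‖F (k + 1) a i‖ - ‖F (k + 1) a j‖)]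
      _ = ((∑ a, ‖F (k + 1) a i‖ ^ 2) + ∑ a, ‖F (k + 1) a j‖ ^ 2) / 2 := by
          rw [← Finset.sum_add_distrib, Finset.sum_div]
      _ ≤ (frob (F (k + 1)) ^ 2 + frob (F (k + 1)) ^ 2) / 2 := by
          have := col_sq_le_frob_sq (F (k + 1)) i
          have := col_sq_le_frob_sq (F (k + 1)) j
          linarith
      _ = frob (F (k + 1)) ^ 2 := by ring
  have hSummEntry : ∀ i j : Fin l, Summable (fun k : ℕ => G k i j) := fun i j =>
    Summable.of_norm_bounded hbfun (hentry i j)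
  set S : Matrix (Fin l) (Fin l) ℂ := fun i j => ∑' k : ℕ, G k i j with hSdef
  have hS : HasSum G S := by
    refine Pi.hasSum.mpr ?_; intro i; refine Pi.hasSum.mpr ?_; intro j
    exact (hSummEntry i j).hasSum
  refine ⟨⟨S, hS⟩, ?_⟩
  -- limit of W is 0
  have hfrob0 : Filter.Tendsto (fun n => frob (F n)) Filter.atTop (nhds 0) := by
    have h2 : Filter.Tendsto (fun n => frob (F n) ^ 2) Filter.atTop (nhds 0) :=
      hFl2.tendsto_atTop_zero
    have h3 : Filter.Tendsto (fun n => Real.sqrt (frob (F n) ^ 2)) Filter.atTop (nhds 0) := by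
      have := (Real.continuous_sqrt.tendsto 0).comp h2
      rwa [Real.sqrt_zero] at this
    refine h3.congr fun n => ?_
    rw [Real.sqrt_sq (frob_nonneg _)]
  have hfrob0' : Filter.Tendsto (fun n => frob (F (n + 1))) Filter.atTop (nhds 0) :=
    hfrob0.comp (Filter.tendsto_add_atTop_nat 1)
  have hWlim0 : Filter.Tendsto W Filter.atTop (nhds 0) := by
    refine tendsto_pi_nhds.mpr ?_; intro i
    refine tendsto_pi_nhds.mpr ?_; intro j
    have hbound : ∀ n, ‖W n i j‖ ≤ 2 * ((l : ℝ) ^ 2 * C) * (frob (F n) * frob (F (n + 1))) := by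
      intro n
      have h1 := entry_triple_le (F n) (F (n + 1)) (D n) C (hCentry n) i j
      have h2 := entry_triple_le (F (n + 1)) (F n) (D n) C (hCentry n) i j
      have h3 : ‖W n i j‖ ≤ ‖((F n)ᴴ * cmat (D n) * F (n + 1)) i j‖
          + ‖((F (n + 1))ᴴ * cmat (D n) * F n) i j‖ := by
        simp only [hWdef, Matrix.sub_apply]
        exact norm_sub_le _ _
      calc ‖W n i j‖ ≤ _ := h3
        _ ≤ (l : ℝ) ^ 2 * C * frob (F n) * frob (F (n + 1))
            + (l : ℝ) ^ 2 * C * frob (F (n + 1)) * frob (F n) := add_le_add h1 h2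
        _ = 2 * ((l : ℝ) ^ 2 * C) * (frob (F n) * frob (F (n + 1))) := by ring
    have hg : Filter.Tendsto
        (fun n => 2 * ((l : ℝ) ^ 2 * C) * (frob (F n) * frob (F (n + 1))))
        Filter.atTop (nhds 0) := by
      have := (hfrob0.mul hfrob0').const_mul (2 * ((l : ℝ) ^ 2 * C))
      simpa using this
    have := squeeze_zero_norm hbound hg
    simpa using this
  -- limit of the partial-sum expression
  have hWlim1 : Filter.Tendsto W Filter.atTop
      (nhds (W 0 + (z - starRingEnd ℂ z) • S)) := by
    have h1 : Filter.Tendsto (fun N => ∑ m ∈ Finset.range N, G m) Filter.atTop (nhds S) :=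
      hS.tendsto_sum_nat
    have h2 := (h1.const_smul (z - starRingEnd ℂ z)).const_add (W 0)
    refine Filter.Tendsto.congr (fun N => ?_) h2
    rw [← hpartial N]
  have huniq : W 0 + (z - starRingEnd ℂ z) • S = 0 := tendsto_nhds_unique hWlim1 hWlim0
  have hcS : (z - starRingEnd ℂ z) • S = -(W 0) :=
    eq_neg_of_add_eq_zero_right huniq
  -- algebra with D 0
  have hdet : IsUnit (cmat (D 0)).det := by
    have h1 : (cmat (D 0)).det = ((D 0).det : ℂ) := by
      rw [show cmat (D 0) = (Complex.ofRealHom).mapMatrix (D 0) from rfl, ← RingHom.map_det]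
      rfl
    rw [h1]
    exact (hDinv 0).map Complex.ofRealHom
  have hinv1 : (cmat (D 0))⁻¹ * cmat (D 0) = 1 := Matrix.nonsing_inv_mul _ hdet
  have hinv2 : cmat (D 0) * (cmat (D 0))⁻¹ = 1 := Matrix.mul_nonsing_inv _ hdet
  have hD0h : (cmat (D 0))ᴴ = cmat (D 0) := cmat_herm (hDsymm 0)
  have hMH : (-(F 1) * (cmat (D 0))⁻¹)ᴴ = -((cmat (D 0))⁻¹ * (F 1)ᴴ) := by
    rw [Matrix.conjTranspose_mul, Matrix.conjTranspose_neg, Matrix.conjTranspose_nonsing_inv,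
      hD0h]
    simp [Matrix.mul_neg, Matrix.neg_mul]
  have hW0val : W 0 = cmat (D 0) * F 1 - (F 1)ᴴ * cmat (D 0) := by
    simp [hWdef, hF0]
  have key : cmat (D 0) * (-(F 1) * (cmat (D 0))⁻¹ - (-(F 1) * (cmat (D 0))⁻¹)ᴴ) * cmat (D 0)
      = -(W 0) := by
    rw [hMH, hW0val]
    have e1 : cmat (D 0) * (-(F 1) * (cmat (D 0))⁻¹) * cmat (D 0) = -(cmat (D 0) * F 1) := by
      simp only [Matrix.neg_mul, Matrix.mul_neg, neg_inj]
      rw [mul_assoc, mul_assoc, hinv1, mul_one]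
    have e2 : cmat (D 0) * (-((cmat (D 0))⁻¹ * (F 1)ᴴ)) * cmat (D 0)
        = -((F 1)ᴴ * cmat (D 0)) := by
      simp only [Matrix.mul_neg, Matrix.neg_mul, neg_inj]
      rw [← mul_assoc (cmat (D 0)) (cmat (D 0))⁻¹ ((F 1)ᴴ), hinv2, one_mul]
    rw [Matrix.mul_sub, Matrix.sub_mul, e1, e2]
    abel
  -- final computation
  have hscal : (2 * Complex.I)⁻¹ * (z - starRingEnd ℂ z) = (z.im : ℂ) := by
    rw [Complex.sub_conj]
    have hI : Complex.I ≠ 0 := Complex.I_ne_zero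
    push_cast
    field_simp
  rw [hS.tsum_eq]
  calc cmat (D 0) * ((2 * Complex.I)⁻¹ • (-(F 1) * (cmat (D 0))⁻¹
          - (-(F 1) * (cmat (D 0))⁻¹)ᴴ)) * cmat (D 0)
      = (2 * Complex.I)⁻¹ • (cmat (D 0) * (-(F 1) * (cmat (D 0))⁻¹
          - (-(F 1) * (cmat (D 0))⁻¹)ᴴ) * cmat (D 0)) := by
        rw [Matrix.mul_smul, Matrix.smul_mul]
    _ = (2 * Complex.I)⁻¹ • ((z - starRingEnd ℂ z) • S) := by rw [key, ← hcS]
    _ = ((2 * Complex.I)⁻¹ * (z - starRingEnd ℂ z)) • S := (smul_smul _ _ _)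
    _ = (z.im : ℂ) • S := by rw [hscal]
end
end

section
/- (Exponential decay of the Green function off the spectrum.) Let H be the bounded self-adjoint block Jacobi operator on ℓ²({1,2,...}; ℂ^l) defined by (Hu)_1 = V_1 u_1 + D_1 u_2 and (Hu)_n = D_{n−1} u_{n−1} + V_n u_n + D_n u_{n+1} for n ≥ 2, where (D_n)_{n≥1} and (V_n)_{n≥1} are real symmetric l×l matrices with sup_n ‖D_n‖ < ∞ and sup_n ‖V_n‖ < ∞. Then for every z ∈ ℂ not in the spectrum of H there exist constants C > 0 and α > 0 such that for every n ≥ 1 and every v ∈ ℂ^l, ‖((H − z)^{-1}(δ_1 ⊗ v))_n‖ ≤ C e^{−α n} ‖v‖, where δ_1 ⊗ v denotes the sequence equal to v at index 1 and 0 elsewhere. -/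
open Matrix

noncomputable section

/-- Multiplication of a vector of `EuclideanSpace ℂ (Fin l)` by (the complexification of)
a real `l×l` matrix. -/
def matAct {l : ℕ} (A : Matrix (Fin l) (Fin l) ℝ) (v : EuclideanSpace ℂ (Fin l)) :
    EuclideanSpace ℂ (Fin l) :=
  (WithLp.equiv 2 (Fin l → ℂ)).symm
    ((A.map Complex.ofReal) *ᵥ (WithLp.equiv 2 (Fin l → ℂ) v))

namespace GreenAux

variable {l : ℕ}

local notation "E" => EuclideanSpace ℂ (Fin l)

lemma euclid_coord_le (v : EuclideanSpace ℂ (Fin l)) (i : Fin l) : ‖v i‖ ≤ ‖v‖ := by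
  have h := EuclideanSpace.norm_eq v
  rw [h]
  have h1 : ‖v i‖ ^ 2 ≤ ∑ j, ‖v j‖ ^ 2 :=
    Finset.single_le_sum (f := fun j => ‖v j‖ ^ 2) (fun j _ => by positivity) (Finset.mem_univ i)
  calc ‖v i‖ = Real.sqrt (‖v i‖ ^ 2) := by rw [Real.sqrt_sq (norm_nonneg _)]
    _ ≤ Real.sqrt (∑ j, ‖v j‖ ^ 2) := Real.sqrt_le_sqrt h1

lemma euclid_coord_le_real (v : EuclideanSpace ℝ (Fin l)) (i : Fin l) : ‖v i‖ ≤ ‖v‖ := by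
  have h := EuclideanSpace.norm_eq v
  rw [h]
  have h1 : ‖v i‖ ^ 2 ≤ ∑ j, ‖v j‖ ^ 2 :=
    Finset.single_le_sum (f := fun j => ‖v j‖ ^ 2) (fun j _ => by positivity) (Finset.mem_univ i)
  calc ‖v i‖ = Real.sqrt (‖v i‖ ^ 2) := by rw [Real.sqrt_sq (norm_nonneg _)]
    _ ≤ Real.sqrt (∑ j, ‖v j‖ ^ 2) := Real.sqrt_le_sqrt h1

lemma opNorm_nonneg (A : Matrix (Fin l) (Fin l) ℝ) : 0 ≤ opNorm A := norm_nonneg _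

lemma abs_entry_le (A : Matrix (Fin l) (Fin l) ℝ) (i j : Fin l) : |A i j| ≤ opNorm A := by
  set e : EuclideanSpace ℝ (Fin l) := EuclideanSpace.single j (1 : ℝ)
  have happ : (Matrix.toEuclideanCLM (𝕜 := ℝ) (n := Fin l) A) e i = A i j := by
    have := Matrix.ofLp_toEuclideanCLM (𝕜 := ℝ) (n := Fin l) A e
    have h2 : (WithLp.equiv _ _ ((Matrix.toEuclideanCLM (𝕜 := ℝ) (n := Fin l) A) e)) i
        = (A *ᵥ (WithLp.equiv _ _ e)) i := congrFun this i
    show ((toEuclideanCLM (𝕜 := ℝ) A) e : Fin l → ℝ) i = A i j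
    rw [show ((toEuclideanCLM (𝕜 := ℝ) A) e : Fin l → ℝ) i
        = (A *ᵥ (WithLp.equiv _ _ e : Fin l → ℝ)) i from h2]
    show ∑ x : Fin l, A i x * (EuclideanSpace.single j (1:ℝ) : EuclideanSpace ℝ (Fin l)) x = A i j
    simp [EuclideanSpace.single_apply, Finset.sum_ite_eq']
  have h3 : ‖(Matrix.toEuclideanCLM (𝕜 := ℝ) (n := Fin l) A) e i‖ ≤ opNorm A * ‖e‖ :=
    (euclid_coord_le_real _ i).trans ((Matrix.toEuclideanCLM (𝕜 := ℝ) (n := Fin l) A).le_opNorm e)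
  have he : ‖e‖ = 1 := by simp [e, EuclideanSpace.norm_single]
  rw [happ, he, mul_one] at h3
  simpa using h3

lemma matAct_zero (A : Matrix (Fin l) (Fin l) ℝ) : matAct A (0 : EuclideanSpace ℂ (Fin l)) = 0 := by
  simp [matAct, WithLp.ofLp_zero, Matrix.mulVec_zero]

lemma matAct_apply (A : Matrix (Fin l) (Fin l) ℝ) (v : EuclideanSpace ℂ (Fin l)) (i : Fin l) :
    matAct A v i = ∑ j, (A i j : ℂ) * v j := by
  rfl

lemma matAct_add (A : Matrix (Fin l) (Fin l) ℝ) (u v : EuclideanSpace ℂ (Fin l)) :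
    matAct A (u + v) = matAct A u + matAct A v := by
  simp [matAct, WithLp.ofLp_add, Matrix.mulVec_add, WithLp.toLp_add]

lemma matAct_smul (A : Matrix (Fin l) (Fin l) ℝ) (c : ℂ) (v : EuclideanSpace ℂ (Fin l)) :
    matAct A (c • v) = c • matAct A v := by
  simp [matAct, WithLp.ofLp_smul, Matrix.mulVec_smul, WithLp.toLp_smul]

lemma matAct_norm_le (A : Matrix (Fin l) (Fin l) ℝ) (v : EuclideanSpace ℂ (Fin l)) :
    ‖matAct A v‖ ≤ ((l : ℝ) ^ 2 * opNorm A) * ‖v‖ := by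
  have hcoord : ∀ i : Fin l, ‖matAct A v i‖ ≤ (l : ℝ) * opNorm A * ‖v‖ := by
    intro i
    rw [matAct_apply]
    calc ‖∑ j, (A i j : ℂ) * v j‖ ≤ ∑ j, ‖(A i j : ℂ) * v j‖ := norm_sum_le _ _
      _ ≤ ∑ j : Fin l, opNorm A * ‖v‖ := by
          refine Finset.sum_le_sum fun j _ => ?_
          rw [norm_mul, Complex.norm_real]
          exact mul_le_mul (abs_entry_le A i j) (euclid_coord_le v j) (norm_nonneg _)
            (opNorm_nonneg A)
      _ = (l : ℝ) * opNorm A * ‖v‖ := by simp [Finset.sum_const, mul_assoc]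
  have hb : 0 ≤ (l : ℝ) * opNorm A * ‖v‖ :=
    mul_nonneg (mul_nonneg (Nat.cast_nonneg l) (opNorm_nonneg A)) (norm_nonneg v)
  rw [EuclideanSpace.norm_eq]
  calc Real.sqrt (∑ i, ‖matAct A v i‖ ^ 2)
      ≤ Real.sqrt (∑ _i : Fin l, ((l : ℝ) * opNorm A * ‖v‖) ^ 2) := by
        refine Real.sqrt_le_sqrt (Finset.sum_le_sum fun i _ => ?_)
        exact pow_le_pow_left₀ (norm_nonneg _) (hcoord i) 2
    _ = Real.sqrt ((l : ℝ) * ((l : ℝ) * opNorm A * ‖v‖) ^ 2) := by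
        simp [Finset.sum_const, nsmul_eq_mul]
    _ ≤ Real.sqrt ((l : ℝ) ^ 2 * ((l : ℝ) * opNorm A * ‖v‖) ^ 2) := by
        refine Real.sqrt_le_sqrt ?_
        have hll : (l : ℝ) ≤ (l : ℝ) ^ 2 := by
          exact_mod_cast Nat.cast_le.mpr (Nat.le_self_pow two_ne_zero l)
        nlinarith [sq_nonneg ((l : ℝ) * opNorm A * ‖v‖)]
    _ = (l : ℝ) * ((l : ℝ) * opNorm A * ‖v‖) := by
        rw [← mul_pow, Real.sqrt_sq (mul_nonneg (Nat.cast_nonneg l) hb)]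
    _ = ((l : ℝ) ^ 2 * opNorm A) * ‖v‖ := by ring

/-- `matAct` as a continuous linear map. -/
def matCLM (A : Matrix (Fin l) (Fin l) ℝ) :
    EuclideanSpace ℂ (Fin l) →L[ℂ] EuclideanSpace ℂ (Fin l) :=
  LinearMap.mkContinuous
    { toFun := matAct A
      map_add' := matAct_add A
      map_smul' := matAct_smul A }
    ((l : ℝ) ^ 2 * opNorm A) (matAct_norm_le A)

@[simp] lemma matCLM_apply (A : Matrix (Fin l) (Fin l) ℝ) (v : EuclideanSpace ℂ (Fin l)) :
    matCLM A v = matAct A v := rfl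

lemma matCLM_norm_le (A : Matrix (Fin l) (Fin l) ℝ) :
    ‖matCLM A‖ ≤ (l : ℝ) ^ 2 * opNorm A :=
  LinearMap.mkContinuous_norm_le _ (mul_nonneg (by positivity) (opNorm_nonneg A)) _

end GreenAux

namespace GreenAux

section Ops

variable {l : ℕ}

local notation "EV" => EuclideanSpace ℂ (Fin l)
local notation "L2" => lp (fun _ : ℕ => EuclideanSpace ℂ (Fin l)) 2

lemma p2pos : (0:ℝ) < (2 : ENNReal).toReal := by norm_num

/-- Builder for continuous linear maps on `ℓ²` given pointwise data with uniform
finite-sum bounds. -/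
def mkOp (F : L2 → ℕ → EV) (C : ℝ) (hC : 0 ≤ C)
    (hadd : ∀ u v, F (u + v) = F u + F v)
    (hsmul : ∀ (c : ℂ) u, F (c • u) = c • F u)
    (hbd : ∀ (u : L2) (s : Finset ℕ),
      ∑ n ∈ s, ‖F u n‖ ^ (2:ENNReal).toReal ≤ (C * ‖u‖) ^ (2:ENNReal).toReal) :
    L2 →L[ℂ] L2 :=
  LinearMap.mkContinuous
    { toFun := fun u => (⟨F u, memℓp_gen' (hbd u)⟩ : L2)
      map_add' := fun u v => Subtype.ext (hadd u v)
      map_smul' := fun c u => Subtype.ext (hsmul c u) }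
    C (fun u => lp.norm_le_of_forall_sum_le p2pos (mul_nonneg hC (norm_nonneg u)) (hbd u))

@[simp] lemma mkOp_apply (F : L2 → ℕ → EV) (C : ℝ) (hC : 0 ≤ C) (hadd hsmul hbd) (u : L2)
    (n : ℕ) : (mkOp F C hC hadd hsmul hbd u : L2) n = F u n := rfl

lemma mkOp_norm_le (F : L2 → ℕ → EV) (C : ℝ) (hC : 0 ≤ C) (hadd hsmul hbd) :
    ‖mkOp F C hC hadd hsmul hbd‖ ≤ C :=
  LinearMap.mkContinuous_norm_le _ hC _

lemma diag_sum (T : ℕ → (EV →L[ℂ] EV)) {C : ℝ} (hC : ∀ n, ‖T n‖ ≤ C)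
    (u : L2) (s : Finset ℕ) :
    ∑ n ∈ s, ‖T n (u n)‖ ^ (2:ENNReal).toReal ≤ (C * ‖u‖) ^ (2:ENNReal).toReal := by
  have hC0 : 0 ≤ C := le_trans (norm_nonneg (T 0)) (hC 0)
  calc ∑ n ∈ s, ‖T n (u n)‖ ^ (2:ENNReal).toReal
      ≤ ∑ n ∈ s, (C * ‖u n‖) ^ (2:ENNReal).toReal := by
        refine Finset.sum_le_sum fun n _ => ?_
        refine Real.rpow_le_rpow (norm_nonneg _) ?_ p2pos.le
        exact ((T n).le_opNorm (u n)).trans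
          (mul_le_mul_of_nonneg_right (hC n) (norm_nonneg _))
    _ = C ^ (2:ENNReal).toReal * ∑ n ∈ s, ‖u n‖ ^ (2:ENNReal).toReal := by
        rw [Finset.mul_sum]
        exact Finset.sum_congr rfl fun n _ => Real.mul_rpow hC0 (norm_nonneg _)
    _ ≤ C ^ (2:ENNReal).toReal * ‖u‖ ^ (2:ENNReal).toReal := by
        exact mul_le_mul_of_nonneg_left (lp.sum_rpow_le_norm_rpow p2pos u s)
          (Real.rpow_nonneg hC0 _)
    _ = (C * ‖u‖) ^ (2:ENNReal).toReal := (Real.mul_rpow hC0 (norm_nonneg _)).symm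

/-- The block-diagonal operator. -/
def diagOp (T : ℕ → (EV →L[ℂ] EV)) {C : ℝ} (hC : ∀ n, ‖T n‖ ≤ C) : L2 →L[ℂ] L2 :=
  mkOp (fun u n => T n (u n)) C (le_trans (norm_nonneg (T 0)) (hC 0))
    (fun u v => by funext n; simp)
    (fun c u => by funext n; simp)
    (diag_sum T hC)

@[simp] lemma diagOp_apply (T : ℕ → (EV →L[ℂ] EV)) {C : ℝ} (hC : ∀ n, ‖T n‖ ≤ C)
    (u : L2) (n : ℕ) : (diagOp T hC u : L2) n = T n (u n) := rfl

lemma diagOp_norm_le (T : ℕ → (EV →L[ℂ] EV)) {C : ℝ} (hC : ∀ n, ‖T n‖ ≤ C) :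
    ‖diagOp T hC‖ ≤ C := mkOp_norm_le _ _ _ _ _ _

lemma shiftL_sum (u : L2) (s : Finset ℕ) :
    ∑ n ∈ s, ‖u (n + 1)‖ ^ (2:ENNReal).toReal ≤ ((1:ℝ) * ‖u‖) ^ (2:ENNReal).toReal := by
  rw [one_mul]
  have : ∑ n ∈ s, ‖u (n + 1)‖ ^ (2:ENNReal).toReal
      = ∑ m ∈ s.image (· + 1), ‖u m‖ ^ (2:ENNReal).toReal := by
    rw [Finset.sum_image]
    intro a _ b _ h
    simpa using h
  rw [this]
  exact lp.sum_rpow_le_norm_rpow p2pos u _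

/-- The left shift `(u_{n+1})_n`. -/
def shiftL : L2 →L[ℂ] L2 :=
  mkOp (fun u n => u (n + 1)) 1 zero_le_one
    (fun u v => by funext n; simp)
    (fun c u => by funext n; simp)
    shiftL_sum

@[simp] lemma shiftL_apply (u : L2) (n : ℕ) : (shiftL u : L2) n = u (n + 1) := rfl

/-- The right-shift pointwise function. -/
def shiftRFun (u : L2) : ℕ → EV
  | 0 => 0
  | (m + 1) => u m

lemma shiftR_sum (u : L2) (s : Finset ℕ) :
    ∑ n ∈ s, ‖shiftRFun u n‖ ^ (2:ENNReal).toReal ≤ ((1:ℝ) * ‖u‖) ^ (2:ENNReal).toReal := by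
  rw [one_mul]
  have hsub : s ⊆ Finset.range (s.sup id + 1) := by
    intro n hn
    simp only [Finset.mem_range]
    exact Nat.lt_succ_of_le (Finset.le_sup (f := id) hn)
  calc ∑ n ∈ s, ‖shiftRFun u n‖ ^ (2:ENNReal).toReal
      ≤ ∑ n ∈ Finset.range (s.sup id + 1), ‖shiftRFun u n‖ ^ (2:ENNReal).toReal := by
        refine Finset.sum_le_sum_of_subset_of_nonneg hsub fun n _ _ => ?_
        exact Real.rpow_nonneg (norm_nonneg _) _
    _ = ∑ n ∈ Finset.range (s.sup id), ‖u n‖ ^ (2:ENNReal).toReal := by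
        rw [Finset.sum_range_succ']
        simp [shiftRFun, Real.zero_rpow p2pos.ne']
    _ ≤ ‖u‖ ^ (2:ENNReal).toReal := lp.sum_rpow_le_norm_rpow p2pos u _

/-- The right shift `(0, u_0, u_1, ...)`. -/
def shiftR : L2 →L[ℂ] L2 :=
  mkOp shiftRFun 1 zero_le_one
    (fun u v => by funext n; cases n <;> simp [shiftRFun])
    (fun c u => by funext n; cases n <;> simp [shiftRFun])
    shiftR_sum

@[simp] lemma shiftR_apply_zero (u : L2) : (shiftR u : L2) 0 = 0 := rfl

@[simp] lemma shiftR_apply_succ (u : L2) (m : ℕ) : (shiftR u : L2) (m + 1) = u m := rfl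

end Ops

end GreenAux

namespace GreenAux

section Main

variable {l : ℕ}

local notation "EV" => EuclideanSpace ℂ (Fin l)
local notation "L2" => lp (fun _ : ℕ => EuclideanSpace ℂ (Fin l)) 2

/-- Sub-diagonal part of the Jacobi operator. -/
def subOp (D : ℕ → Matrix (Fin l) (Fin l) ℝ) {CD : ℝ}
    (h : ∀ n, ‖matCLM (D n)‖ ≤ CD) : L2 →L[ℂ] L2 :=
  (diagOp (fun n => matCLM (D n)) h).comp shiftR

lemma subOp_apply_zero (D : ℕ → Matrix (Fin l) (Fin l) ℝ) {CD : ℝ}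
    (h : ∀ n, ‖matCLM (D n)‖ ≤ CD) (u : L2) : (subOp D h u : L2) 0 = 0 := by
  show matCLM (D 0) ((shiftR u : L2) 0) = 0
  simp [matAct_zero]

lemma subOp_apply_succ (D : ℕ → Matrix (Fin l) (Fin l) ℝ) {CD : ℝ}
    (h : ∀ n, ‖matCLM (D n)‖ ≤ CD) (u : L2) (m : ℕ) :
    (subOp D h u : L2) (m + 1) = matAct (D (m + 1)) (u m) := by
  show matCLM (D (m + 1)) ((shiftR u : L2) (m + 1)) = _
  simp

/-- Super-diagonal part of the Jacobi operator. -/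
def supOp (D : ℕ → Matrix (Fin l) (Fin l) ℝ) {CD : ℝ}
    (h : ∀ n, ‖matCLM (D (n + 1))‖ ≤ CD) : L2 →L[ℂ] L2 :=
  (diagOp (fun n => matCLM (D (n + 1))) h).comp shiftL

lemma supOp_apply (D : ℕ → Matrix (Fin l) (Fin l) ℝ) {CD : ℝ}
    (h : ∀ n, ‖matCLM (D (n + 1))‖ ≤ CD) (u : L2) (n : ℕ) :
    (supOp D h u : L2) n = matAct (D (n + 1)) (u (n + 1)) := rfl

lemma expOp_bound (θ : ℝ) (hθ : 0 ≤ θ) (n : ℕ) :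
    ‖(Complex.ofReal (Real.exp (-θ * n)) • (1 : EV →L[ℂ] EV))‖ ≤ 1 := by
  refine (ContinuousLinearMap.opNorm_smul_le _ _).trans ?_
  have h1 : ‖(Complex.ofReal (Real.exp (-θ * n)))‖ ≤ 1 := by
    rw [Complex.norm_real, Real.norm_eq_abs, abs_of_pos (Real.exp_pos _)]
    rw [Real.exp_le_one_iff]
    have : (0:ℝ) ≤ θ * n := mul_nonneg hθ (Nat.cast_nonneg n)
    linarith
  have h2 : ‖(1 : EV →L[ℂ] EV)‖ ≤ 1 := ContinuousLinearMap.norm_id_le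
  calc ‖(Complex.ofReal (Real.exp (-θ * n)))‖ * ‖(1 : EV →L[ℂ] EV)‖ ≤ 1 * 1 :=
        mul_le_mul h1 h2 (norm_nonneg _) zero_le_one
    _ = 1 := by ring

/-- The diagonal damping operator with weights `e^{-θ n}`. -/
def expOp (θ : ℝ) (hθ : 0 ≤ θ) : L2 →L[ℂ] L2 :=
  diagOp (fun n => (Complex.ofReal (Real.exp (-θ * n)) • (1 : EV →L[ℂ] EV)))
    (expOp_bound θ hθ)

lemma expOp_apply (θ : ℝ) (hθ : 0 ≤ θ) (u : L2) (n : ℕ) :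
    (expOp θ hθ u : L2) n = (Complex.ofReal (Real.exp (-θ * n))) • u n := rfl

end Main

end GreenAux


open GreenAux

set_option maxHeartbeats 1000000 in
/-- **Exponential decay of the Green function off the spectrum.**  Sites of the half line
`{1, 2, ...}` are indexed by `n : ℕ`, with `n` standing for the site `n + 1`; thus
`(Hu)_1 = V_1 u_1 + D_1 u_2` reads `H u 0 = V 1 (u 0) + D 1 (u 1)`, and for `n ≥ 1`
`H u n = D n (u (n-1)) + V (n+1) (u n) + D (n+1) (u (n+1))`. -/
theorem green_function_exponential_decay (l : ℕ) (hl : 1 ≤ l)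
    (D V : ℕ → Matrix (Fin l) (Fin l) ℝ)
    (hDsymm : ∀ n, (D n).IsSymm) (hVsymm : ∀ n, (V n).IsSymm)
    (hDbdd : ∃ C : ℝ, ∀ n, opNorm (D n) ≤ C)
    (hVbdd : ∃ C : ℝ, ∀ n, opNorm (V n) ≤ C)
    (H : lp (fun _ : ℕ => EuclideanSpace ℂ (Fin l)) 2 →L[ℂ]
         lp (fun _ : ℕ => EuclideanSpace ℂ (Fin l)) 2)
    (hHsa : IsSelfAdjoint H)
    (hHact : ∀ u : lp (fun _ : ℕ => EuclideanSpace ℂ (Fin l)) 2, ∀ n : ℕ,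
      H u n = if n = 0 then matAct (V 1) (u 0) + matAct (D 1) (u 1)
        else matAct (D n) (u (n - 1)) + matAct (V (n + 1)) (u n)
          + matAct (D (n + 1)) (u (n + 1)))
    (z : ℂ) (hz : z ∉ spectrum ℂ H) :
    ∃ C : ℝ, 0 < C ∧ ∃ α : ℝ, 0 < α ∧
      ∀ n : ℕ, ∀ v : EuclideanSpace ℂ (Fin l),
        ‖(Ring.inverse (H - algebraMap ℂ _ z) (lp.single 2 0 v)) n‖
          ≤ C * Real.exp (-α * ((n : ℝ) + 1)) * ‖v‖ := by
  classical
  obtain ⟨CD0, hCD0⟩ := hDbdd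
  set CD : ℝ := (l : ℝ) ^ 2 * max CD0 0 with hCDdef
  have hDb : ∀ n, ‖matCLM (D n)‖ ≤ CD := fun n =>
    (matCLM_norm_le (D n)).trans
      (mul_le_mul_of_nonneg_left ((hCD0 n).trans (le_max_left _ _)) (by positivity))
  have hDb' : ∀ n, ‖matCLM (D (n + 1))‖ ≤ CD := fun n => hDb (n + 1)
  set Msub := subOp D hDb with hMsubdef
  set Msup := supOp D hDb' with hMsupdef
  -- the resolvent is a unit
  have hunit : IsUnit (H - algebraMap ℂ _ z) := by
    have h1 : IsUnit (algebraMap ℂ _ z - H) := spectrum.notMem_iff.mp hz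
    simpa [neg_sub] using h1.neg
  obtain ⟨x, hx⟩ := hunit
  -- nontriviality
  have hv0 : (EuclideanSpace.single (⟨0, hl⟩ : Fin l) (1 : ℂ)) ≠ 0 := by
    intro h
    have := congrFun (congrArg (fun w : EuclideanSpace ℂ (Fin l) => (w : Fin l → ℂ)) h)
      ⟨0, hl⟩
    simp [EuclideanSpace.single_apply] at this
  set u₀ : lp (fun _ : ℕ => EuclideanSpace ℂ (Fin l)) 2 :=
    lp.single 2 0 (EuclideanSpace.single (⟨0, hl⟩ : Fin l) (1 : ℂ)) with hu₀def
  have hu0 : u₀ ≠ 0 := by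
    intro h
    apply hv0
    have := congrFun (congrArg (Subtype.val) h) 0
    simpa [hu₀def, lp.single_apply_self] using this
  haveI : Nontrivial (lp (fun _ : ℕ => EuclideanSpace ℂ (Fin l)) 2) :=
    ⟨_, _, hu0⟩
  haveI : Nontrivial (lp (fun _ : ℕ => EuclideanSpace ℂ (Fin l)) 2 →L[ℂ]
      lp (fun _ : ℕ => EuclideanSpace ℂ (Fin l)) 2) := by
    refine ⟨1, 0, fun h => hu0 ?_⟩
    have := DFunLike.congr_fun h u₀
    simpa using this
  -- choice of θ
  set ε : ℝ := ‖((x⁻¹ : _ˣ) : lp (fun _ : ℕ => EuclideanSpace ℂ (Fin l)) 2 →L[ℂ]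
      lp (fun _ : ℕ => EuclideanSpace ℂ (Fin l)) 2)‖⁻¹ with hεdef
  have hεpos : 0 < ε := inv_pos.mpr (Units.norm_pos x⁻¹)
  set B : ℝ := ‖Msub‖ + ‖Msup‖ + 1 with hBdef
  have hBpos : 0 < B := by positivity
  set δ : ℝ := ε / B with hδdef
  have hδpos : 0 < δ := div_pos hεpos hBpos
  set θ : ℝ := Real.log (1 + δ / 2) with hθdef
  have hθpos : 0 < θ := Real.log_pos (by linarith)
  have hexpθ : Real.exp θ = 1 + δ / 2 := Real.exp_log (by linarith)
  set b : ℂ := Complex.ofReal (Real.exp θ) with hbdef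
  set c : ℂ := Complex.ofReal (Real.exp (-θ)) with hcdef
  have hbc : b * c = 1 := by
    rw [hbdef, hcdef, ← Complex.ofReal_mul, ← Real.exp_add]
    simp
  have hcne : c ≠ 0 := by
    rw [hcdef]
    exact_mod_cast Complex.ofReal_ne_zero.mpr (Real.exp_ne_zero _)
  set Kθ := (b - 1) • (Msub : lp (fun _ : ℕ => EuclideanSpace ℂ (Fin l)) 2 →L[ℂ]
      lp (fun _ : ℕ => EuclideanSpace ℂ (Fin l)) 2) + (c - 1) • Msup with hKdef
  -- norm of the perturbation
  have hKnorm : ‖Kθ‖ < ε := by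
    have h1 : ‖Kθ‖ ≤ ‖b - 1‖ * ‖Msub‖ + ‖c - 1‖ * ‖Msup‖ := by
      exact (norm_add_le _ _).trans (add_le_add (ContinuousLinearMap.opNorm_smul_le _ _)
        (ContinuousLinearMap.opNorm_smul_le _ _))
    have hb1 : ‖b - 1‖ = Real.exp θ - 1 := by
      rw [hbdef, show (1 : ℂ) = Complex.ofReal 1 by simp, ← Complex.ofReal_sub,
        Complex.norm_real, Real.norm_eq_abs, abs_of_nonneg]
      linarith [Real.one_le_exp hθpos.le]
    have hc1 : ‖c - 1‖ ≤ Real.exp θ - 1 := by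
      rw [hcdef, show (1 : ℂ) = Complex.ofReal 1 by simp, ← Complex.ofReal_sub,
        Complex.norm_real, Real.norm_eq_abs]
      have he1 : Real.exp (-θ) ≤ 1 := Real.exp_le_one_iff.mpr (by linarith)
      have he2 : Real.exp (-θ) = (Real.exp θ)⁻¹ := Real.exp_neg θ
      have he3 : 1 ≤ Real.exp θ := Real.one_le_exp hθpos.le
      have he4 : Real.exp θ * Real.exp (-θ) = 1 := by rw [← Real.exp_add]; simp
      rw [abs_of_nonpos (by linarith)]
      have key : 0 ≤ (Real.exp θ - 1) * (1 - Real.exp (-θ)) :=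
        mul_nonneg (by linarith) (by linarith)
      nlinarith [key]
    have hsum : ‖Msub‖ + ‖Msup‖ ≤ B - 1 := by rw [hBdef]; linarith
    have hδB : δ * B = ε := div_mul_cancel₀ ε hBpos.ne'
    have hd2 : Real.exp θ - 1 = δ / 2 := by linarith
    nlinarith [norm_nonneg Msub, norm_nonneg Msup, norm_nonneg Kθ, hδpos, hεpos, hBpos]
  set Wop : lp (fun _ : ℕ => EuclideanSpace ℂ (Fin l)) 2 →L[ℂ]
      lp (fun _ : ℕ => EuclideanSpace ℂ (Fin l)) 2 := expOp θ hθpos.le with hWopdef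
  have hWapp : ∀ (u : lp (fun _ : ℕ => EuclideanSpace ℂ (Fin l)) 2) (m : ℕ),
      (Wop u) m = (Complex.ofReal (Real.exp (-θ * m))) • u m := by
    intro u m
    rw [hWopdef]
    exact expOp_apply θ hθpos.le u m
  have hKapp : ∀ (u : lp (fun _ : ℕ => EuclideanSpace ℂ (Fin l)) 2) (n : ℕ),
      (Kθ u) n = (b - 1) • (Msub u) n + (c - 1) • (Msup u) n := by
    intro u n
    rw [hKdef]
    simp only [ContinuousLinearMap.add_apply, ContinuousLinearMap.smul_apply,
      lp.coeFn_add, lp.coeFn_smul, Pi.add_apply, Pi.smul_apply]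
  have hsplit : ∀ m : ℕ,
      (Complex.ofReal (Real.exp (-θ * ((m : ℕ) + 1 : ℕ)))) =
        Complex.ofReal (Real.exp (-θ * m)) * c := by
    intro m
    rw [hcdef, ← Complex.ofReal_mul, ← Real.exp_add]
    congr 1
    push_cast
    ring
  -- the key intertwining identity
  have key : ∀ (u : lp (fun _ : ℕ => EuclideanSpace ℂ (Fin l)) 2) (n : ℕ),
      (H (Wop u)) n = (Wop (H u + Kθ u)) n := by
    intro u n
    have hR : (Wop (H u + Kθ u)) n
        = (Complex.ofReal (Real.exp (-θ * n))) • ((H u) n + (Kθ u) n) := by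
      rw [hWapp (H u + Kθ u) n, lp.coeFn_add, Pi.add_apply]
    rw [hHact (Wop u) n, hR, hHact u n, hKapp u n]
    rcases n with _ | m
    · rw [if_pos rfl, if_pos rfl]
      rw [hWapp u 0, hWapp u 1, hMsubdef, subOp_apply_zero, hMsupdef, supOp_apply]
      rw [matAct_smul, matAct_smul]
      have h0 : Complex.ofReal (Real.exp (-θ * ((0:ℕ):ℝ))) = 1 := by norm_num
      have h1 : Complex.ofReal (Real.exp (-θ * ((1:ℕ):ℝ))) = c := by
        rw [hcdef]; norm_num
      rw [h0, h1]
      rw [smul_zero]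
      module
    · rw [if_neg (Nat.succ_ne_zero m), if_neg (Nat.succ_ne_zero m)]
      simp only [Nat.add_sub_cancel]
      rw [hWapp u m, hWapp u (m + 1), hWapp u (m + 2),
        hMsubdef, subOp_apply_succ, hMsupdef, supOp_apply]
      rw [matAct_smul, matAct_smul, matAct_smul]
      rw [show ((m:ℕ) + 2 : ℕ) = ((m + 1 : ℕ) + 1 : ℕ) by rfl, hsplit (m + 1), hsplit m]
      match_scalars
      · linear_combination (-Complex.exp (-(θ:ℂ) * (m:ℂ))) * hbc
      · ring
      · ring
  -- the perturbed operator is a unit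
  set y := x.add Kθ hKnorm with hydef
  have hyval : (y.val : lp (fun _ : ℕ => EuclideanSpace ℂ (Fin l)) 2 →L[ℂ]
      lp (fun _ : ℕ => EuclideanSpace ℂ (Fin l)) 2) = (H - algebraMap ℂ _ z) + Kθ := by
    rw [hydef, Units.val_add, hx]
  refine ⟨(‖(y⁻¹).val‖ + 1) * Real.exp θ, by positivity, θ, hθpos, ?_⟩
  intro n v
  set s : lp (fun _ : ℕ => EuclideanSpace ℂ (Fin l)) 2 := lp.single 2 0 v with hsdef
  set w : lp (fun _ : ℕ => EuclideanSpace ℂ (Fin l)) 2 := (y⁻¹).val s with hwdef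
  have hyw : y.val w = s := by
    rw [hwdef, ← ContinuousLinearMap.mul_apply, y.mul_inv, ContinuousLinearMap.one_apply]
  have hyapp : ∀ k : ℕ, (y.val w) k = (H w) k + (Kθ w) k - z • (w k) := by
    intro k
    rw [hyval]
    simp only [ContinuousLinearMap.add_apply, ContinuousLinearMap.sub_apply,
      Algebra.algebraMap_eq_smul_one, ContinuousLinearMap.smul_apply,
      ContinuousLinearMap.one_apply, lp.coeFn_add, lp.coeFn_sub, lp.coeFn_smul,
      Pi.add_apply, Pi.sub_apply, Pi.smul_apply]
    abel
  have hG : (H - algebraMap ℂ _ z) (Wop w) = s := by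
    apply lp.ext
    funext k
    have l1 : ((H - algebraMap ℂ _ z) (Wop w)) k = (H (Wop w)) k - z • ((Wop w) k) := by
      simp only [ContinuousLinearMap.sub_apply, Algebra.algebraMap_eq_smul_one,
        ContinuousLinearMap.smul_apply, ContinuousLinearMap.one_apply,
        lp.coeFn_sub, lp.coeFn_smul, Pi.sub_apply, Pi.smul_apply]
    have l2 : (H (Wop w)) k - z • ((Wop w) k)
        = (Complex.ofReal (Real.exp (-θ * k))) • ((y.val w) k) := by
      rw [key w k, hWapp (H w + Kθ w) k, lp.coeFn_add, Pi.add_apply, hWapp w k,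
        hyapp k, smul_sub, smul_add, smul_comm z]
    rw [l1, l2, hyw]
    rcases k with _ | j
    · rw [hsdef, lp.single_apply_self (E := fun _ : ℕ => EuclideanSpace ℂ (Fin l)) 2 0 v]
      norm_num
    · rw [hsdef, lp.single_apply_ne (E := fun _ : ℕ => EuclideanSpace ℂ (Fin l)) 2 0 v
        (Nat.succ_ne_zero j), smul_zero]
  have hGinv : Ring.inverse (H - algebraMap ℂ _ z) s = Wop w := by
    calc Ring.inverse (H - algebraMap ℂ _ z) s
        = (x⁻¹).val s := by rw [← hx, Ring.inverse_unit]
      _ = (x⁻¹).val ((H - algebraMap ℂ _ z) (Wop w)) := by rw [hG]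
      _ = ((x⁻¹).val * x.val) (Wop w) := by
          rw [hx, ContinuousLinearMap.mul_apply]
      _ = Wop w := by rw [x.inv_mul, ContinuousLinearMap.one_apply]
  rw [hGinv]
  have hsv : ‖s‖ = ‖v‖ := by
    rw [hsdef]
    exact lp.norm_single (E := fun _ : ℕ => EuclideanSpace ℂ (Fin l)) (p := 2) (by norm_num) 0 v
  have hee : Real.exp (-θ * n) = Real.exp θ * Real.exp (-θ * ((n : ℝ) + 1)) := by
    rw [← Real.exp_add]
    congr 1
    ring
  calc ‖(Wop w) n‖ = Real.exp (-θ * n) * ‖w n‖ := by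
        rw [hWapp w n, norm_smul, Complex.norm_real, Real.norm_eq_abs,
          abs_of_pos (Real.exp_pos _)]
    _ ≤ Real.exp (-θ * n) * (‖(y⁻¹).val‖ * ‖v‖) := by
        have h1 : ‖w n‖ ≤ ‖w‖ := lp.norm_apply_le_norm (by norm_num) w n
        have h2 : ‖w‖ ≤ ‖(y⁻¹).val‖ * ‖s‖ := by
          rw [hwdef]
          exact ((y⁻¹).val).le_opNorm s
        rw [hsv] at h2
        exact mul_le_mul_of_nonneg_left (h1.trans h2) (Real.exp_pos _).le
    _ = Real.exp θ * Real.exp (-θ * ((n : ℝ) + 1)) * (‖(y⁻¹).val‖ * ‖v‖) := by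
        rw [hee]
    _ ≤ Real.exp θ * Real.exp (-θ * ((n : ℝ) + 1)) * ((‖(y⁻¹).val‖ + 1) * ‖v‖) := by
        have : ‖(y⁻¹).val‖ ≤ ‖(y⁻¹).val‖ + 1 := by linarith
        have hnn : (0:ℝ) ≤ Real.exp θ * Real.exp (-θ * ((n : ℝ) + 1)) := by positivity
        exact mul_le_mul_of_nonneg_left
          (mul_le_mul_of_nonneg_right this (norm_nonneg v)) hnn
    _ = (‖(y⁻¹).val‖ + 1) * Real.exp θ * Real.exp (-θ * ((n : ℝ) + 1)) * ‖v‖ := by ring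
end
end

section
/- For all positive semidefinite Hermitian l×l complex matrices A and B and every r ∈ {1, ..., l}, one has tr(AB) ≥ λ_r(A) · λ_{l−r+1}(B), where λ_1(X) ≥ ... ≥ λ_l(X) denote the eigenvalues of a positive semidefinite Hermitian matrix X arranged in decreasing order (which coincide with its singular values). -/
open Matrix
open scoped ComplexOrder
open ComplexConjugate

noncomputable section

/-- Key combinatorial inequality: if `d` is doubly stochastic (nonnegative with row and
column sums `1`) and `a, b` are nonnegative antitone sequences, then
`∑ j k, a j * b k * d j k ≥ a i * b i.rev`. -/
lemma key_ds {l : ℕ} (a b : Fin l → ℝ) (d : Fin l → Fin l → ℝ)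
    (ha : ∀ j, 0 ≤ a j) (hb : ∀ k, 0 ≤ b k) (hd : ∀ j k, 0 ≤ d j k)
    (hrow : ∀ j, ∑ k, d j k = 1) (hcol : ∀ k, ∑ j, d j k = 1)
    (haA : Antitone a) (hbA : Antitone b) (i : Fin l) :
    a i * b i.rev ≤ ∑ j, ∑ k, a j * b k * d j k := by
  classical
  set S : Finset (Fin l) := Finset.Iic i with hSdef
  set T : Finset (Fin l) := Finset.Iic i.rev with hTdef
  have hcardS : S.card = (i : ℕ) + 1 := Fin.card_Iic i
  have hcardT : T.card = (i.rev : ℕ) + 1 := Fin.card_Iic i.rev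
  have hcardTc : (Tᶜ.card : ℝ) = (i : ℕ) := by
    have h1 : Tᶜ.card = l - T.card := by
      rw [Finset.card_compl, Fintype.card_fin]
    have h2 : (i.rev : ℕ) = l - ((i : ℕ) + 1) := Fin.val_rev i
    have h3 : (i : ℕ) < l := i.isLt
    have : Tᶜ.card = (i : ℕ) := by omega
    exact_mod_cast this
  have h1 : (1:ℝ) ≤ ∑ j ∈ S, ∑ k ∈ T, d j k := by
    have hS : ∀ j ∈ S, ∑ k ∈ T, d j k = 1 - ∑ k ∈ Tᶜ, d j k := by
      intro j _
      have := hrow j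
      rw [← Finset.sum_add_sum_compl T (d j)] at this
      linarith
    rw [Finset.sum_congr rfl hS, Finset.sum_sub_distrib]
    have h2 : ∑ j ∈ S, ∑ k ∈ Tᶜ, d j k ≤ ∑ j, ∑ k ∈ Tᶜ, d j k :=
      Finset.sum_le_sum_of_subset_of_nonneg (Finset.subset_univ S)
        (fun j _ _ => Finset.sum_nonneg fun k _ => hd j k)
    have h3 : ∑ j, ∑ k ∈ Tᶜ, d j k = (Tᶜ.card : ℝ) := by
      rw [Finset.sum_comm, Finset.sum_congr rfl fun k _ => hcol k]
      simp
    have h4 : (S.card : ℝ) = (i : ℕ) + 1 := by exact_mod_cast congrArg Nat.cast hcardS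
    rw [Finset.sum_const, nsmul_eq_mul, mul_one]
    rw [h3] at h2
    rw [hcardTc] at h2
    linarith
  have hab : 0 ≤ a i * b i.rev := mul_nonneg (ha i) (hb i.rev)
  calc a i * b i.rev ≤ a i * b i.rev * ∑ j ∈ S, ∑ k ∈ T, d j k :=
        le_mul_of_one_le_right hab h1
    _ = ∑ j ∈ S, ∑ k ∈ T, a i * b i.rev * d j k := by
        rw [Finset.mul_sum]; exact Finset.sum_congr rfl fun j _ => Finset.mul_sum _ _ _
    _ ≤ ∑ j ∈ S, ∑ k ∈ T, a j * b k * d j k := by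
        refine Finset.sum_le_sum fun j hj => Finset.sum_le_sum fun k hk => ?_
        have hj' : j ≤ i := Finset.mem_Iic.mp hj
        have hk' : k ≤ i.rev := Finset.mem_Iic.mp hk
        exact mul_le_mul_of_nonneg_right
          (mul_le_mul (haA hj') (hbA hk') (hb i.rev) (ha j)) (hd j k)
    _ ≤ ∑ j, ∑ k, a j * b k * d j k := by
        refine le_trans (Finset.sum_le_sum_of_subset_of_nonneg (Finset.subset_univ S)
          (fun j _ _ => Finset.sum_nonneg fun k _ =>
            mul_nonneg (mul_nonneg (ha j) (hb k)) (hd j k))) ?_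
        refine Finset.sum_le_sum fun j _ => ?_
        exact Finset.sum_le_sum_of_subset_of_nonneg (Finset.subset_univ T)
          (fun k _ _ => mul_nonneg (mul_nonneg (ha j) (hb k)) (hd j k))

/-- The eigenvalues of a Hermitian matrix arranged in decreasing order; the index `i : Fin l`
corresponds to the eigenvalue `λ_{i+1}` (so `i = 0` gives the largest one and `i = l - 1` the
smallest one). -/
def eigsDesc {l : ℕ} (A : Matrix (Fin l) (Fin l) ℂ) (hA : A.IsHermitian) (i : Fin l) : ℝ :=
  (hA.eigenvalues ∘ Tuple.sort hA.eigenvalues) i.rev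

/-- For positive semidefinite Hermitian `A, B` and every `r ∈ {1, ..., l}` (here `r = i + 1`
for `i : Fin l`, so that `λ_{l - r + 1}(B)` is `eigsDesc B _ i.rev`):
`tr(AB) ≥ λ_r(A) λ_{l-r+1}(B)`.  For positive semidefinite matrices the eigenvalues in
decreasing order coincide with the singular values. -/
theorem trace_mul_ge_eig_mul_eig (l : ℕ) (hl : 1 ≤ l)
    (A B : Matrix (Fin l) (Fin l) ℂ)
    (hA : A.PosSemidef) (hB : B.PosSemidef) (i : Fin l) :
    ((A * B).trace).re ≥ eigsDesc A hA.isHermitian i * eigsDesc B hB.isHermitian i.rev := by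
  classical
  set UA : Matrix (Fin l) (Fin l) ℂ := (IsHermitian.eigenvectorUnitary hA.isHermitian :
    Matrix (Fin l) (Fin l) ℂ) with hUAdef
  set UB : Matrix (Fin l) (Fin l) ℂ := (IsHermitian.eigenvectorUnitary hB.isHermitian :
    Matrix (Fin l) (Fin l) ℂ) with hUBdef
  set α : Fin l → ℝ := hA.isHermitian.eigenvalues with hαdef
  set β : Fin l → ℝ := hB.isHermitian.eigenvalues with hβdef
  set C : Matrix (Fin l) (Fin l) ℂ := star UA * UB with hCdef
  have hUAu : UA ∈ Matrix.unitaryGroup (Fin l) ℂ :=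
    (IsHermitian.eigenvectorUnitary hA.isHermitian).2
  have hUBu : UB ∈ Matrix.unitaryGroup (Fin l) ℂ :=
    (IsHermitian.eigenvectorUnitary hB.isHermitian).2
  have hUA1 : star UA * UA = 1 := hUAu.1
  have hUA2 : UA * star UA = 1 := hUAu.2
  have hUB1 : star UB * UB = 1 := hUBu.1
  have hUB2 : UB * star UB = 1 := hUBu.2
  have hstarC : star C = star UB * UA := by
    rw [hCdef, StarMul.star_mul, star_star]
  have hC1 : C * star C = 1 := by
    rw [hstarC, hCdef, Matrix.mul_assoc, ← Matrix.mul_assoc UB, hUB2,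
      Matrix.one_mul, hUA1]
  have hC2 : star C * C = 1 := by
    rw [hstarC, hCdef, Matrix.mul_assoc, ← Matrix.mul_assoc UA, hUA2,
      Matrix.one_mul, hUB1]
  set Dα : Matrix (Fin l) (Fin l) ℂ := diagonal (Complex.ofReal ∘ α) with hDαdef
  set Dβ : Matrix (Fin l) (Fin l) ℂ := diagonal (Complex.ofReal ∘ β) with hDβdef
  -- trace identity
  have hspecA : A = UA * Dα * star UA := hA.isHermitian.spectral_theorem
  have hspecB : B = UB * Dβ * star UB := hB.isHermitian.spectral_theorem
  have cancelA : ∀ X : Matrix (Fin l) (Fin l) ℂ, star UA * (UA * X) = X := by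
    intro X; rw [← Matrix.mul_assoc, hUA1, Matrix.one_mul]
  have htr : (A * B).trace = (Dα * (C * (Dβ * star C))).trace := by
    have hconj : star UA * (A * B) * UA = Dα * (C * (Dβ * star C)) := by
      rw [hstarC, hCdef, hspecA, hspecB]
      simp only [Matrix.mul_assoc]
      rw [cancelA]
    have : (A * B).trace = (star UA * (A * B) * UA).trace := by
      rw [Matrix.trace_mul_cycle, ← Matrix.mul_assoc, hUA2, Matrix.one_mul]
    rw [this, hconj]
  -- entrywise formula for the trace
  have hentry : ((A * B).trace).re = ∑ j, ∑ k, α j * β k * Complex.normSq (C j k) := by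
    rw [htr]
    rw [Matrix.trace]
    rw [Complex.re_sum]
    refine Finset.sum_congr rfl fun j _ => ?_
    have hdiag : (Dα * (C * (Dβ * star C))).diag j
        = ∑ k, (α j : ℂ) * (C j k * ((β k : ℂ) * conj (C j k))) := by
      rw [Matrix.diag_apply, hDαdef, Matrix.diagonal_mul, Matrix.mul_apply, Finset.mul_sum]
      refine Finset.sum_congr rfl fun k _ => ?_
      rw [hDβdef, Matrix.diagonal_mul, Matrix.star_apply, RCLike.star_def]
      simp only [Function.comp_apply]
    rw [hdiag, Complex.re_sum]
    refine Finset.sum_congr rfl fun k _ => ?_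
    have : (α j : ℂ) * (C j k * ((β k : ℂ) * conj (C j k)))
        = ((α j * β k * Complex.normSq (C j k) : ℝ) : ℂ) := by
      rw [show (α j : ℂ) * (C j k * ((β k : ℂ) * conj (C j k)))
        = (α j : ℂ) * (β k : ℂ) * (C j k * conj (C j k)) from by ring, Complex.mul_conj]
      push_cast
      ring
    rw [this, Complex.ofReal_re]
  -- row/column sums
  have hrowsum : ∀ j, ∑ k, Complex.normSq (C j k) = 1 := by
    intro j
    have h := congrFun (congrFun hC1 j) j
    rw [Matrix.mul_apply] at h
    have h' := congrArg Complex.re h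
    rw [Complex.re_sum] at h'
    simp only [Matrix.star_apply, RCLike.star_def, Complex.mul_conj, Complex.ofReal_re] at h'
    simpa [Matrix.one_apply] using h'
  have hcolsum : ∀ k, ∑ j, Complex.normSq (C j k) = 1 := by
    intro k
    have h := congrFun (congrFun hC2 k) k
    rw [Matrix.mul_apply] at h
    have h' := congrArg Complex.re h
    rw [Complex.re_sum] at h'
    simp only [Matrix.star_apply, RCLike.star_def] at h'
    have h'' : ∀ j, ((starRingEnd ℂ) (C j k) * C j k).re = Complex.normSq (C j k) := by
      intro j
      rw [mul_comm, Complex.mul_conj, Complex.ofReal_re]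
    rw [Finset.sum_congr rfl fun j _ => h'' j] at h'
    simpa [Matrix.one_apply] using h'
  -- reindexing permutations
  set σA : Equiv.Perm (Fin l) := Tuple.sort α with hσA
  set σB : Equiv.Perm (Fin l) := Tuple.sort β with hσB
  set eA : Fin l ≃ Fin l := Fin.revPerm.trans σA with heA
  set eB : Fin l ≃ Fin l := Fin.revPerm.trans σB with heB
  set a : Fin l → ℝ := fun j => α (eA j) with hadef
  set b : Fin l → ℝ := fun k => β (eB k) with hbdef
  set d : Fin l → Fin l → ℝ := fun j k => Complex.normSq (C (eA j) (eB k)) with hddef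
  have hreindex : ∑ j, ∑ k, α j * β k * Complex.normSq (C j k)
      = ∑ j, ∑ k, a j * b k * d j k := by
    refine (Fintype.sum_equiv eA _ _ fun j => ?_).symm
    exact Fintype.sum_equiv eB _ _ fun k => rfl
  have haA : Antitone a := by
    intro j j' h
    exact Tuple.monotone_sort α (Fin.rev_le_rev.mpr h)
  have hbA : Antitone b := by
    intro k k' h
    exact Tuple.monotone_sort β (Fin.rev_le_rev.mpr h)
  have ha : ∀ j, 0 ≤ a j := fun j => hA.eigenvalues_nonneg _
  have hb : ∀ k, 0 ≤ b k := fun k => hB.eigenvalues_nonneg _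
  have hd : ∀ j k, 0 ≤ d j k := fun j k => Complex.normSq_nonneg _
  have hrow : ∀ j, ∑ k, d j k = 1 := by
    intro j
    rw [hddef]
    rw [Fintype.sum_equiv eB _ (fun k => Complex.normSq (C (eA j) k)) fun k => rfl]
    exact hrowsum (eA j)
  have hcol : ∀ k, ∑ j, d j k = 1 := by
    intro k
    rw [hddef]
    rw [Fintype.sum_equiv eA _ (fun j => Complex.normSq (C j (eB k))) fun j => rfl]
    exact hcolsum (eB k)
  have hmain := key_ds a b d ha hb hd hrow hcol haA hbA i
  rw [hentry, hreindex]
  exact hmain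
end
end
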